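/- arXiv:0908.4387 — 12 statements merged into one kernel-verified Lean document; each statement's English description precedes it below -/
import Mathlib

section
/- Let a = p/q > 1 be rational, let A, B be nonnegative integers not both zero, let T = T^a_{A,B}, let k ≥ 1 be the number of lattice points on the slant edge of T (the segment where x + a·y = A + a·B, x ≥ 0, y ≥ 0), and let d be a positive integer such that #(T ∩ ℤ²) ≤ (d+1)(d+2)/2 + k − 1. Let (A₀,B₀) be the lattice point on the slant edge with smallest x-coordinate and (A₁,B₁) the lattice point on the slant edge with largest x-coordinate. Then there exists ε > 0 such that for every irrational z with a − ε < z < a one has k_{A₀,B₀}(z) ≥ (A₀ + z·B₀)/d, and for every irrational z with a < z < a + ε one has k_{A₁,B₁}(z) ≥ (A₁ + z·B₁)/d. -/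
/-- The number of lattice points in the triangle `T^a_{A,B} = {(x,y) : x ≥ 0, y ≥ 0, x + a·y ≤ A + a·B}`. -/
noncomputable def latticeCount (a : ℝ) (A B : ℕ) : ℕ :=
  Set.ncard {xy : ℤ × ℤ | 0 ≤ xy.1 ∧ 0 ≤ xy.2 ∧ (xy.1 : ℝ) + a * xy.2 ≤ (A : ℝ) + a * B}

/-- The smallest positive integer `d` such that `#(T^a_{A,B} ∩ ℤ²) ≤ (d+1)(d+2)/2`
(stated multiplied by 2 to avoid division). -/
noncomputable def ddeg (a : ℝ) (A B : ℕ) : ℕ :=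
  sInf {d : ℕ | 0 < d ∧ 2 * latticeCount a A B ≤ (d+1)*(d+2)}

/-- `k_{A,B}(a) := (A + a·B) / d^a_{A,B}`. -/
noncomputable def kABval (a : ℝ) (A B : ℕ) : ℝ := ((A : ℝ) + a * B) / (ddeg a A B)

/-- The number of lattice points on the slant edge `{x + a·y = A + a·B, x ≥ 0, y ≥ 0}`
of the triangle `T^a_{A,B}`. -/
noncomputable def slantCount (a : ℝ) (A B : ℕ) : ℕ :=
  Set.ncard {xy : ℤ × ℤ | 0 ≤ xy.1 ∧ 0 ≤ xy.2 ∧ (xy.1 : ℝ) + a * xy.2 = (A : ℝ) + a * B}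

lemma tri_finite (a C : ℝ) (ha : 1 ≤ a) :
    {xy : ℤ × ℤ | 0 ≤ xy.1 ∧ 0 ≤ xy.2 ∧ (xy.1 : ℝ) + a * xy.2 ≤ C}.Finite := by
  apply Set.Finite.subset ((Set.finite_Icc (0:ℤ) ⌈C⌉).prod (Set.finite_Icc (0:ℤ) ⌈C⌉))
  rintro ⟨x, y⟩ ⟨hx, hy, hle⟩
  have hxr : (0:ℝ) ≤ x := by exact_mod_cast hx
  have hyr : (0:ℝ) ≤ y := by exact_mod_cast hy
  have h1 : (x:ℝ) ≤ C := by nlinarith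
  have h2 : (y:ℝ) ≤ C := by nlinarith
  have hc := Int.le_ceil C
  constructor
  · exact ⟨hx, by exact_mod_cast h1.trans hc⟩
  · exact ⟨hy, by exact_mod_cast h2.trans hc⟩

lemma count_aux (a z : ℝ) (ha : 1 ≤ a) (A B A' B' : ℕ)
    (hA' : (A' : ℝ) + a * B' = (A : ℝ) + a * B)
    (hS : ∀ x y : ℤ, 0 ≤ x → 0 ≤ y → (x:ℝ) + z * y ≤ (A':ℝ) + z * B' →
      (x:ℝ) + a * y ≤ (A:ℝ) + a * B)
    (hE : ∀ x y : ℤ, 0 ≤ x → 0 ≤ y → (x:ℝ) + z * y ≤ (A':ℝ) + z * B' →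
      (x:ℝ) + a * y = (A:ℝ) + a * B → x = (A':ℤ) ∧ y = (B':ℤ)) :
    latticeCount z A' B' + (slantCount a A B - 1) ≤ latticeCount a A B := by
  classical
  set S : Set (ℤ × ℤ) := {xy | 0 ≤ xy.1 ∧ 0 ≤ xy.2 ∧ (xy.1 : ℝ) + a * xy.2 ≤ (A : ℝ) + a * B} with hSdef
  set E : Set (ℤ × ℤ) := {xy | 0 ≤ xy.1 ∧ 0 ≤ xy.2 ∧ (xy.1 : ℝ) + a * xy.2 = (A : ℝ) + a * B} with hEdef
  set pt : ℤ × ℤ := ((A' : ℤ), (B' : ℤ)) with hptdef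
  have hSfin : S.Finite := tri_finite a _ ha
  have hES : E ⊆ S := by rintro ⟨x, y⟩ ⟨hx, hy, he⟩; exact ⟨hx, hy, he.le⟩
  have hEfin : E.Finite := hSfin.subset hES
  have hpt : pt ∈ E := ⟨Int.natCast_nonneg _, Int.natCast_nonneg _, by push_cast; exact hA'⟩
  have hsub : {xy : ℤ × ℤ | 0 ≤ xy.1 ∧ 0 ≤ xy.2 ∧ (xy.1 : ℝ) + z * xy.2 ≤ (A' : ℝ) + z * B'}
      ⊆ S \ (E \ {pt}) := by
    rintro ⟨x, y⟩ ⟨hx, hy, hle⟩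
    refine ⟨⟨hx, hy, hS x y hx hy hle⟩, ?_⟩
    rintro ⟨hmem, hne⟩
    obtain ⟨h1, h2⟩ := hE x y hx hy hle hmem.2.2
    exact hne (by simp [hptdef, h1, h2, Prod.ext_iff])
  have h1 : latticeCount z A' B' ≤ (S \ (E \ {pt})).ncard :=
    Set.ncard_le_ncard hsub hSfin.diff
  have hEptS : E \ {pt} ⊆ S := Set.diff_subset.trans hES
  have h2 : (S \ (E \ {pt})).ncard = S.ncard - (E \ {pt}).ncard :=
    Set.ncard_diff hEptS hEfin.diff
  have h3 : (E \ {pt}).ncard = E.ncard - 1 := Set.ncard_diff_singleton_of_mem hpt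
  have h4 : (E \ {pt}).ncard ≤ S.ncard := Set.ncard_le_ncard hEptS hSfin
  have h5 : latticeCount a A B = S.ncard := rfl
  have h6 : slantCount a A B = E.ncard := rfl
  omega
set_option maxHeartbeats 4000000 in
/-- Lemma `le:ECH1`: for rational `a = p/q > 1`, if the lattice count of
`T^a_{A,B}` is at most `(d+1)(d+2)/2 + k − 1` where `k ≥ 1` is the number of lattice points
on the slant edge, and `(A₀,B₀)` (resp. `(A₁,B₁)`) is the lattice point on the slant edge of
smallest (resp. largest) `x`-coordinate, then there is `ε > 0` such that
`k_{A₀,B₀}(z) ≥ (A₀ + z·B₀)/d` for irrational `z ∈ (a−ε, a)` and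
`k_{A₁,B₁}(z) ≥ (A₁ + z·B₁)/d` for irrational `z ∈ (a, a+ε)`. -/
theorem ech_lemma_one (p q A B : ℕ) (hq : 0 < q) (hpq : q < p) (hAB : ¬ (A = 0 ∧ B = 0))
    (k d : ℕ) (hk1 : 1 ≤ k) (hk : k = slantCount ((p : ℝ)/q) A B) (hd : 0 < d)
    (hcount : 2 * latticeCount ((p : ℝ)/q) A B ≤ (d+1)*(d+2) + 2*(k-1))
    (A₀ B₀ A₁ B₁ : ℕ)
    (h₀ : (A₀ : ℝ) + ((p : ℝ)/q) * B₀ = (A : ℝ) + ((p : ℝ)/q) * B)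
    (h₀min : ∀ x y : ℕ, (x : ℝ) + ((p : ℝ)/q) * y = (A : ℝ) + ((p : ℝ)/q) * B → A₀ ≤ x)
    (h₁ : (A₁ : ℝ) + ((p : ℝ)/q) * B₁ = (A : ℝ) + ((p : ℝ)/q) * B)
    (h₁max : ∀ x y : ℕ, (x : ℝ) + ((p : ℝ)/q) * y = (A : ℝ) + ((p : ℝ)/q) * B → x ≤ A₁) :
    ∃ ε > (0 : ℝ),
      (∀ z : ℝ, Irrational z → (p : ℝ)/q - ε < z → z < (p : ℝ)/q →
        ((A₀ : ℝ) + z * B₀) / d ≤ kABval z A₀ B₀) ∧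
      (∀ z : ℝ, Irrational z → (p : ℝ)/q < z → z < (p : ℝ)/q + ε →
        ((A₁ : ℝ) + z * B₁) / d ≤ kABval z A₁ B₁) := by
  set a : ℝ := (p : ℝ)/q with ha_def
  have hq0 : (0:ℝ) < q := by exact_mod_cast hq
  have hqp : (q:ℝ) < p := by exact_mod_cast hpq
  have ha1 : 1 < a := (one_lt_div hq0).2 hqp
  have hmul : ∀ u v : ℝ, (q:ℝ) * (u + a * v) = q * u + p * v := by
    intro u v; rw [ha_def]; field_simp
  set ε : ℝ := min ((a-1)/2) (1/(q*(A₀+B₁+1))) with hε_def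
  have hε0 : 0 < ε := by
    apply lt_min (by linarith)
    positivity
  have hεa : ε ≤ (a-1)/2 := min_le_left _ _
  have hεq : ε * (q*((A₀:ℝ)+B₁+1)) ≤ 1 := by
    have h1 : ε ≤ 1/(q*((A₀:ℝ)+B₁+1)) := min_le_right _ _
    have h2 : (0:ℝ) < q*((A₀:ℝ)+B₁+1) := by positivity
    calc ε * (q*((A₀:ℝ)+B₁+1)) ≤ (1/(q*((A₀:ℝ)+B₁+1))) * (q*((A₀:ℝ)+B₁+1)) :=
          mul_le_mul_of_nonneg_right h1 h2.le
      _ = 1 := by field_simp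
  -- positivity of A₀+B₀ and A₁+B₁
  have hApos : 0 < A + B := by
    rcases Nat.eq_zero_or_pos (A+B) with h | h
    · exfalso; exact hAB ⟨by omega, by omega⟩
    · exact h
  have hABr : 0 < (A:ℝ) + a * B := by
    have h1 : (1:ℝ) ≤ (A:ℝ) + B := by exact_mod_cast hApos
    nlinarith [Nat.cast_nonneg (α := ℝ) B, Nat.cast_nonneg (α := ℝ) A]
  -- the integer rounding lemma
  have hround : ∀ x y : ℤ, (x:ℝ) + a * y < (A:ℝ) + a * B + 1/q →
      (x:ℝ) + a * y ≤ (A:ℝ) + a * B := by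
    intro x y h
    have h1 : (q:ℝ) * ((x:ℝ) + a * y) < (q:ℝ) * ((A:ℝ) + a * B + 1/q) :=
      mul_lt_mul_of_pos_left h hq0
    have h2 : (q:ℝ) * ((A:ℝ) + a * B + 1/q) = (q:ℝ)*A + p*B + 1 := by
      rw [mul_add, hmul]; field_simp
    rw [hmul, h2] at h1
    have h3 : (q:ℤ)*x + p*y < (q:ℤ)*A + p*B + 1 := by exact_mod_cast h1
    have h4 : (q:ℤ)*x + p*y ≤ (q:ℤ)*A + p*B := by omega
    have h5 : (q:ℝ)*x + p*y ≤ (q:ℝ)*A + p*B := by exact_mod_cast h4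
    rw [← hmul, ← hmul] at h5
    exact le_of_mul_le_mul_left h5 hq0
  refine ⟨ε, hε0, ?_, ?_⟩
  · -- left side: z < a
    intro z _ hz1 hz2
    have hz1' : 1 < z := by linarith
    have hzε : a - z < ε := by linarith
    have hza : 0 < a - z := by linarith
    -- inclusion hypotheses
    have hS : ∀ x y : ℤ, 0 ≤ x → 0 ≤ y → (x:ℝ) + z * y ≤ (A₀:ℝ) + z * B₀ →
        (x:ℝ) + a * y ≤ (A:ℝ) + a * B := by
      intro x y hx hy hle
      have hxr : (0:ℝ) ≤ x := by exact_mod_cast hx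
      have hyr : (0:ℝ) ≤ y := by exact_mod_cast hy
      apply hround
      have hid : (x:ℝ) + a * y =
          ((x:ℝ) + z * y) + (a - z) * ((y:ℝ) - B₀) + ((A₀:ℝ) + a * B₀) - ((A₀:ℝ) + z * B₀) := by
        ring
      have hstep : (x:ℝ) + a * y ≤ (A:ℝ) + a * B + (a - z) * ((y:ℝ) - B₀) := by
        rw [hid, h₀]; linarith
      have hbound : (a - z) * ((y:ℝ) - B₀) < 1/q := by
        rcases le_or_gt (y:ℝ) (B₀:ℝ) with hyB | hyB
        · have : (a - z) * ((y:ℝ) - B₀) ≤ 0 := mul_nonpos_of_nonneg_of_nonpos hza.le (by linarith)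
          have : (0:ℝ) < 1/q := by positivity
          linarith
        · have hy1 : (B₀:ℝ) + 1 ≤ y := by
            have : (B₀:ℤ) < y := by exact_mod_cast hyB
            exact_mod_cast this
          have hv1 : (1:ℝ) ≤ (y:ℝ) - B₀ := by linarith
          have ht1 : z * ((y:ℝ) - B₀) ≤ (A₀:ℝ) := by linarith
          have ht2 : (y:ℝ) - B₀ ≤ (A₀:ℝ) := by nlinarith
          rw [lt_div_iff₀ hq0]
          have hB1 : (0:ℝ) ≤ (B₁:ℝ) := Nat.cast_nonneg _
          have hvq : (0:ℝ) < ((y:ℝ) - B₀) * q := mul_pos (by linarith) hq0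
          calc (a - z) * ((y:ℝ) - B₀) * q = (a - z) * (((y:ℝ) - B₀) * q) := by ring
            _ < ε * (((y:ℝ) - B₀) * q) := mul_lt_mul_of_pos_right hzε hvq
            _ ≤ ε * ((A₀:ℝ) * q) :=
                mul_le_mul_of_nonneg_left (mul_le_mul_of_nonneg_right ht2 hq0.le) hε0.le
            _ ≤ ε * (q * ((A₀:ℝ) + B₁ + 1)) :=
                mul_le_mul_of_nonneg_left
                  (by nlinarith [mul_nonneg hq0.le (by positivity : (0:ℝ) ≤ (B₁:ℝ) + 1)]) hε0.le
            _ ≤ 1 := hεq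
      linarith [hstep, hbound]
    have hE : ∀ x y : ℤ, 0 ≤ x → 0 ≤ y → (x:ℝ) + z * y ≤ (A₀:ℝ) + z * B₀ →
        (x:ℝ) + a * y = (A:ℝ) + a * B → x = (A₀:ℤ) ∧ y = (B₀:ℤ) := by
      intro x y hx hy hle heq
      lift x to ℕ using hx
      lift y to ℕ using hy
      have hminx : A₀ ≤ x := h₀min x y (by exact_mod_cast heq)
      have hminx' : (A₀:ℝ) ≤ x := by exact_mod_cast hminx
      have he : a * ((B₀:ℝ) - y) = (x:ℝ) - A₀ := by
        have heq' : (x:ℝ) + a * y = (A:ℝ) + a * B := by exact_mod_cast heq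
        linarith [h₀, heq']
      have hyB : (y:ℝ) ≤ B₀ := by nlinarith
      have hBy : (B₀:ℝ) ≤ y := by
        by_contra hcon
        push_neg at hcon
        have hle' : (x:ℝ) + z * y ≤ (A₀:ℝ) + z * B₀ := by exact_mod_cast hle
        nlinarith
      have hyB₀ : (y:ℝ) = B₀ := le_antisymm hyB hBy
      have hy' : y = B₀ := by exact_mod_cast hyB₀
      have hx' : (x:ℝ) = A₀ := by rw [hyB₀] at he; nlinarith
      have hx'' : x = A₀ := by exact_mod_cast hx'
      exact ⟨by exact_mod_cast hx'', by exact_mod_cast hy'⟩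
    have hcnt := count_aux a z ha1.le A B A₀ B₀ h₀ hS hE
    rw [← hk] at hcnt
    have hdm : d ∈ {d : ℕ | 0 < d ∧ 2 * latticeCount z A₀ B₀ ≤ (d+1)*(d+2)} :=
      ⟨hd, by omega⟩
    have hdle : ddeg z A₀ B₀ ≤ d := Nat.sInf_le hdm
    have hdpos : 0 < ddeg z A₀ B₀ := (Nat.sInf_mem ⟨d, hdm⟩).1
    have hnum : 0 < (A₀:ℝ) + z * B₀ := by
      have h1 : 0 < (A₀:ℝ) + a * B₀ := by rw [h₀]; exact hABr
      nlinarith [Nat.cast_nonneg (α := ℝ) B₀, Nat.cast_nonneg (α := ℝ) A₀]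
    unfold kABval
    exact div_le_div_of_nonneg_left hnum.le (by exact_mod_cast hdpos) (by exact_mod_cast hdle)
  · -- right side: z > a
    intro z _ hz1 hz2
    have hz1' : 1 < z := by linarith
    have hzε : z - a < ε := by linarith
    have hza : 0 < z - a := by linarith
    have hS : ∀ x y : ℤ, 0 ≤ x → 0 ≤ y → (x:ℝ) + z * y ≤ (A₁:ℝ) + z * B₁ →
        (x:ℝ) + a * y ≤ (A:ℝ) + a * B := by
      intro x y hx hy hle
      have hxr : (0:ℝ) ≤ x := by exact_mod_cast hx
      have hyr : (0:ℝ) ≤ y := by exact_mod_cast hy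
      apply hround
      have hid : (x:ℝ) + a * y =
          ((x:ℝ) + z * y) + (z - a) * ((B₁:ℝ) - y) + ((A₁:ℝ) + a * B₁) - ((A₁:ℝ) + z * B₁) := by
        ring
      have hstep : (x:ℝ) + a * y ≤ (A:ℝ) + a * B + (z - a) * ((B₁:ℝ) - y) := by
        rw [hid, h₁]; linarith
      have hbound : (z - a) * ((B₁:ℝ) - y) < 1/q := by
        rcases le_or_gt (B₁:ℝ) (y:ℝ) with hyB | hyB
        · have : (z - a) * ((B₁:ℝ) - y) ≤ 0 := mul_nonpos_of_nonneg_of_nonpos hza.le (by linarith)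
          have : (0:ℝ) < 1/q := by positivity
          linarith
        · have ht2 : (B₁:ℝ) - y ≤ (B₁:ℝ) := by linarith
          rw [lt_div_iff₀ hq0]
          have hA0 : (0:ℝ) ≤ (A₀:ℝ) := Nat.cast_nonneg _
          have hvq : (0:ℝ) < ((B₁:ℝ) - y) * q := mul_pos (by linarith) hq0
          calc (z - a) * ((B₁:ℝ) - y) * q = (z - a) * (((B₁:ℝ) - y) * q) := by ring
            _ < ε * (((B₁:ℝ) - y) * q) := mul_lt_mul_of_pos_right hzε hvq
            _ ≤ ε * ((B₁:ℝ) * q) :=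
                mul_le_mul_of_nonneg_left (mul_le_mul_of_nonneg_right ht2 hq0.le) hε0.le
            _ ≤ ε * (q * ((A₀:ℝ) + B₁ + 1)) :=
                mul_le_mul_of_nonneg_left
                  (by nlinarith [mul_nonneg hq0.le (by positivity : (0:ℝ) ≤ (A₀:ℝ) + 1)]) hε0.le
            _ ≤ 1 := hεq
      linarith [hstep, hbound]
    have hE : ∀ x y : ℤ, 0 ≤ x → 0 ≤ y → (x:ℝ) + z * y ≤ (A₁:ℝ) + z * B₁ →
        (x:ℝ) + a * y = (A:ℝ) + a * B → x = (A₁:ℤ) ∧ y = (B₁:ℤ) := by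
      intro x y hx hy hle heq
      lift x to ℕ using hx
      lift y to ℕ using hy
      have hmaxx : x ≤ A₁ := h₁max x y (by exact_mod_cast heq)
      have hmaxx' : (x:ℝ) ≤ A₁ := by exact_mod_cast hmaxx
      have he : a * ((B₁:ℝ) - y) = (x:ℝ) - A₁ := by
        have heq' : (x:ℝ) + a * y = (A:ℝ) + a * B := by exact_mod_cast heq
        linarith [h₁, heq']
      have hBy : (B₁:ℝ) ≤ y := by nlinarith
      have hyB : (y:ℝ) ≤ B₁ := by
        by_contra hcon
        push_neg at hcon
        have hle' : (x:ℝ) + z * y ≤ (A₁:ℝ) + z * B₁ := by exact_mod_cast hle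
        nlinarith
      have hyB₁ : (y:ℝ) = B₁ := le_antisymm hyB hBy
      have hy' : y = B₁ := by exact_mod_cast hyB₁
      have hx' : (x:ℝ) = A₁ := by rw [hyB₁] at he; nlinarith
      have hx'' : x = A₁ := by exact_mod_cast hx'
      exact ⟨by exact_mod_cast hx'', by exact_mod_cast hy'⟩
    have hcnt := count_aux a z ha1.le A B A₁ B₁ h₁ hS hE
    rw [← hk] at hcnt
    have hdm : d ∈ {d : ℕ | 0 < d ∧ 2 * latticeCount z A₁ B₁ ≤ (d+1)*(d+2)} :=
      ⟨hd, by omega⟩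
    have hdle : ddeg z A₁ B₁ ≤ d := Nat.sInf_le hdm
    have hdpos : 0 < ddeg z A₁ B₁ := (Nat.sInf_mem ⟨d, hdm⟩).1
    have hnum : 0 < (A₁:ℝ) + z * B₁ := by
      have h1 : 0 < (A₁:ℝ) + a * B₁ := by rw [h₁]; exact hABr
      nlinarith [Nat.cast_nonneg (α := ℝ) B₁, Nat.cast_nonneg (α := ℝ) A₁]
    unfold kABval
    exact div_le_div_of_nonneg_left hnum.le (by exact_mod_cast hdpos) (by exact_mod_cast hdle)
end

section
/- For every n ≥ 1 there exists ε > 0 such that for every irrational z with b_n − ε < z < b_n one has k_{0,g_n}(z) ≥ z·g_n/g_{n+1}. Consequently, for every δ > 0 there exists an irrational z with z < b_n and k_{0,g_n}(z) > g_{n+2}/g_{n+1} − δ; that is, the supremum of k-values over irrational z < b_n is at least √(a_{n+1}) = g_{n+2}/g_{n+1}. -/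
/-- The odd-indexed Fibonacci numbers: `g n = fib (2n-1)` for `n ≥ 1`, with `g 0 = 1`. -/
def g : ℕ → ℕ
  | 0 => 1
  | (n+1) => Nat.fib (2*n+1)

lemma g_pos (n : ℕ) : 0 < g n := by
  cases n with
  | zero => decide
  | succ m => exact Nat.fib_pos.mpr (by omega)

lemma fib_step (k : ℕ) : Nat.fib (k+4) + Nat.fib k = 3 * Nat.fib (k+2) := by
  have f1 : Nat.fib (k+2) = Nat.fib k + Nat.fib (k+1) := Nat.fib_add_two
  have f2 : Nat.fib (k+3) = Nat.fib (k+1) + Nat.fib (k+2) := Nat.fib_add_two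
  have f3 : Nat.fib (k+4) = Nat.fib (k+2) + Nat.fib (k+3) := Nat.fib_add_two
  omega

lemma g_rec (n : ℕ) : g (n+2) + g n = 3 * g (n+1) := by
  cases n with
  | zero => decide
  | succ m =>
    have h := fib_step (2*m+1)
    show Nat.fib (2*(m+2)+1) + Nat.fib (2*m+1) = 3 * Nat.fib (2*(m+1)+1)
    have e1 : 2*(m+2)+1 = (2*m+1)+4 := by ring
    have e2 : 2*(m+1)+1 = (2*m+1)+2 := by ring
    rw [e1, e2]; exact h

lemma g_id (n : ℕ) : g (n+2) * g n = g (n+1) * g (n+1) + 1 := by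
  induction n with
  | zero => decide
  | succ m ih =>
    have hB := g_rec (m+1)
    have hC := g_rec m
    zify at ih hB hC ⊢
    linear_combination (g (m+1) : ℤ) * hB - (g (m+2) : ℤ) * hC + ih

lemma g_coprime (n : ℕ) (hn : 1 ≤ n) : Nat.Coprime (g (n+2)) (g n) := by
  obtain ⟨m, rfl⟩ : ∃ m, n = m + 1 := ⟨n - 1, by omega⟩
  show Nat.Coprime (Nat.fib (2*(m+2)+1)) (Nat.fib (2*m+1))
  unfold Nat.Coprime
  rw [← Nat.fib_gcd]
  have h1 : Nat.gcd (2*(m+2)+1) (2*m+1) = Nat.gcd (2*m+1) 4 := by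
    rw [Nat.gcd_comm]
    have e : 2*(m+2)+1 = 4 + (2*m+1)*1 := by ring
    rw [e, Nat.gcd_add_mul_left_right]
  have h2 : Nat.gcd (2*m+1) 4 = 1 := by
    have hd4 : Nat.gcd (2*m+1) 4 ∣ 4 := Nat.gcd_dvd_right _ _
    have hdo : Nat.gcd (2*m+1) 4 ∣ (2*m+1) := Nat.gcd_dvd_left _ _
    have hle : Nat.gcd (2*m+1) 4 ≤ 4 := Nat.le_of_dvd (by norm_num) hd4
    set d := Nat.gcd (2*m+1) 4 with hd
    interval_cases d <;> omega
  rw [h1, h2]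
  rfl

lemma div_pair {Q a b : ℕ} (hQ : 0 < Q) (hd : Q ∣ (a + b)) (ha : ¬ Q ∣ a) (hb : ¬ Q ∣ b) :
    (a + b) / Q = a / Q + b / Q + 1 := by
  rw [Nat.add_div hQ]
  have h1 : 0 < a % Q := Nat.pos_of_ne_zero (fun h => ha (Nat.dvd_of_mod_eq_zero h))
  have h2 : 0 < b % Q := Nat.pos_of_ne_zero (fun h => hb (Nat.dvd_of_mod_eq_zero h))
  have h3 : (a % Q + b % Q) % Q = 0 := by
    rw [← Nat.add_mod]
    obtain ⟨c, hc⟩ := hd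
    simp [hc, Nat.mul_mod_right]
  have h4 : a % Q < Q := Nat.mod_lt _ hQ
  have h5 : b % Q < Q := Nat.mod_lt _ hQ
  have h6 : Q ≤ a % Q + b % Q := by
    rcases Nat.lt_or_ge (a % Q + b % Q) Q with h | h
    · rw [Nat.mod_eq_of_lt h] at h3; omega
    · exact h
  rw [if_pos h6]

lemma sum_div_twice {P Q : ℕ} (hP : 0 < P) (hQ : 0 < Q) (hco : Nat.Coprime P Q) :
    2 * (∑ m ∈ Finset.range Q, P * m / Q) + P + Q = P * Q + 1 := by
  obtain ⟨Q', rfl⟩ : ∃ q, Q = q + 1 := ⟨Q - 1, by omega⟩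
  obtain ⟨p, rfl⟩ : ∃ p, P = p + 1 := ⟨P - 1, by omega⟩
  have hsplit : (∑ m ∈ Finset.range (Q'+1), (p+1) * m / (Q'+1))
      = ∑ j ∈ Finset.range Q', (p+1) * (j+1) / (Q'+1) := by
    rw [Finset.sum_range_succ']
    simp
  rw [hsplit]
  have hrefl : ∑ j ∈ Finset.range Q', (p+1) * (Q' - 1 - j + 1) / (Q'+1)
      = ∑ j ∈ Finset.range Q', (p+1) * (j+1) / (Q'+1) :=
    Finset.sum_range_reflect (fun j => (p+1) * (j+1) / (Q'+1)) Q'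
  have hterm : ∀ j ∈ Finset.range Q',
      (p+1) * (j+1) / (Q'+1) + (p+1) * (Q' - 1 - j + 1) / (Q'+1) = p := by
    intro j hj
    rw [Finset.mem_range] at hj
    have e1 : Q' - 1 - j + 1 = Q' - j := by omega
    rw [e1]
    have hnd1 : ¬ (Q'+1) ∣ (p+1) * (j+1) := by
      intro h
      have h' := (Nat.Coprime.symm hco).dvd_of_dvd_mul_left h
      have := Nat.le_of_dvd (by omega) h'
      omega
    have hnd2 : ¬ (Q'+1) ∣ (p+1) * (Q' - j) := by
      intro h
      have h' := (Nat.Coprime.symm hco).dvd_of_dvd_mul_left h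
      have := Nat.le_of_dvd (by omega) h'
      omega
    have hsum : (p+1) * (j+1) + (p+1) * (Q' - j) = (p+1) * (Q'+1) := by
      rw [← Nat.mul_add]; congr 1; omega
    have hdvd : (Q'+1) ∣ ((p+1) * (j+1) + (p+1) * (Q' - j)) := by
      rw [hsum]; exact ⟨p+1, by ring⟩
    have hdp := div_pair (by omega : 0 < Q'+1) hdvd hnd1 hnd2
    rw [hsum, Nat.mul_div_cancel _ (by omega : 0 < Q'+1)] at hdp
    omega
  have h2S : 2 * (∑ j ∈ Finset.range Q', (p+1) * (j+1) / (Q'+1)) = Q' * p := by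
    have hs : 2 * (∑ j ∈ Finset.range Q', (p+1) * (j+1) / (Q'+1))
        = ∑ j ∈ Finset.range Q', ((p+1) * (j+1) / (Q'+1) + (p+1) * (Q' - 1 - j + 1) / (Q'+1)) := by
      rw [Finset.sum_add_distrib, hrefl]; ring
    rw [hs, Finset.sum_congr rfl hterm, Finset.sum_const, Finset.card_range, smul_eq_mul]
  rw [h2S]; ring

lemma count_le_sum (z : ℝ) (hz : 0 < z) (B : ℕ) :
    latticeCount z 0 B ≤ ∑ m ∈ Finset.range (B+1), (Nat.floor (z * m) + 1) := by
  classical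
  set F : Finset (ℤ × ℤ) :=
    (Finset.range (B+1)).biUnion
      (fun m => (Finset.range (Nat.floor (z * m) + 1)).image
        (fun x : ℕ => ((x : ℤ), ((B - m : ℕ) : ℤ)))) with hF
  have hsub : {xy : ℤ × ℤ | 0 ≤ xy.1 ∧ 0 ≤ xy.2 ∧ (xy.1 : ℝ) + z * xy.2 ≤ ((0:ℕ) : ℝ) + z * B}
      ⊆ ↑F := by
    rintro ⟨x, y⟩ ⟨hx, hy, hle⟩
    simp only [Nat.cast_zero, zero_add] at hle
    have hyB : (y : ℝ) ≤ (B : ℝ) := by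
      by_contra hcon
      push_neg at hcon
      have hx' : (0:ℝ) ≤ (x:ℝ) := by exact_mod_cast hx
      nlinarith
    have hyB' : y.toNat ≤ B := by
      have : y ≤ (B : ℤ) := by exact_mod_cast hyB
      omega
    have hytn : ((y.toNat : ℕ) : ℝ) = (y : ℝ) := by
      have := Int.toNat_of_nonneg hy
      exact_mod_cast this
    have hmem : ((x, y) : ℤ × ℤ) ∈ F := by
      rw [hF, Finset.mem_biUnion]
      refine ⟨B - y.toNat, Finset.mem_range.mpr (by omega), ?_⟩
      rw [Finset.mem_image]
      refine ⟨x.toNat, ?_, ?_⟩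
      · rw [Finset.mem_range, Nat.lt_succ_iff, Nat.le_floor_iff]
        · have hxtn : ((x.toNat : ℕ) : ℝ) = (x : ℝ) := by
            have := Int.toNat_of_nonneg hx
            exact_mod_cast this
          rw [hxtn]
          have hc : ((B - y.toNat : ℕ) : ℝ) = (B : ℝ) - (y : ℝ) := by
            rw [Nat.cast_sub hyB', hytn]
          rw [hc]
          nlinarith
        · positivity
      · have h1 : ((x.toNat : ℕ) : ℤ) = x := Int.toNat_of_nonneg hx
        have h2 : ((B - (B - y.toNat) : ℕ) : ℤ) = y := by
          have e : B - (B - y.toNat) = y.toNat := by omega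
          rw [e]
          exact Int.toNat_of_nonneg hy
        rw [h1, h2]
    exact hmem
  calc latticeCount z 0 B
      ≤ (↑F : Set (ℤ × ℤ)).ncard := Set.ncard_le_ncard hsub F.finite_toSet
    _ = F.card := Set.ncard_coe_finset F
    _ ≤ ∑ m ∈ Finset.range (B+1),
          ((Finset.range (Nat.floor (z * m) + 1)).image
            (fun x : ℕ => ((x : ℤ), ((B - m : ℕ) : ℤ)))).card := Finset.card_biUnion_le
    _ ≤ ∑ m ∈ Finset.range (B+1), (Nat.floor (z * m) + 1) := by
        apply Finset.sum_le_sum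
        intro m _
        exact (Finset.card_image_le).trans_eq (Finset.card_range _)

lemma count_bound (n : ℕ) (hn : 1 ≤ n) (z : ℝ) (hz0 : 0 < z)
    (hzb : z < (g (n+2) : ℝ) / (g n)) :
    2 * latticeCount z 0 (g n) ≤ (g (n+1) + 1) * (g (n+1) + 2) := by
  set P := g (n+2) with hP
  set Q := g n with hQ
  set M := g (n+1) with hM
  have hPpos : 0 < P := g_pos _
  have hQpos : 0 < Q := g_pos _
  have hMpos : 0 < M := g_pos _
  have hQR : (0:ℝ) < (Q:ℝ) := by exact_mod_cast hQpos
  -- floor bounds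
  have hfloor : ∀ m : ℕ, m < Q → Nat.floor (z * m) ≤ P * m / Q := by
    intro m _
    have h1 : z * m ≤ ((P * m : ℕ) : ℝ) / (Q : ℝ) := by
      calc z * m ≤ ((P:ℝ)/(Q:ℝ)) * m :=
            mul_le_mul_of_nonneg_right (le_of_lt hzb) (by positivity)
        _ = ((P * m : ℕ) : ℝ) / Q := by push_cast; ring
    calc Nat.floor (z * m) ≤ Nat.floor (((P * m : ℕ) : ℝ) / (Q : ℝ)) := Nat.floor_mono h1
      _ = Nat.floor (((P * m : ℕ) : ℝ)) / Q := Nat.floor_div_natCast _ _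
      _ = P * m / Q := by rw [Nat.floor_natCast]
  have hlast : Nat.floor (z * Q) + 1 ≤ P := by
    have h1 : z * Q < (P : ℝ) := by
      rw [lt_div_iff₀ hQR] at hzb
      exact hzb
    have h2 : Nat.floor (z * Q) < P := by
      rcases le_or_gt (z * Q) 0 with h | h
      · have : Nat.floor (z * Q) = 0 := Nat.floor_of_nonpos h
        omega
      · exact (Nat.floor_lt (le_of_lt h)).mpr h1
    omega
  have hcount := count_le_sum z hz0 Q
  have hsum1 : ∑ m ∈ Finset.range (Q+1), (Nat.floor (z * m) + 1)
      = (∑ m ∈ Finset.range Q, (Nat.floor (z * m) + 1)) + (Nat.floor (z * Q) + 1) := by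
    rw [Finset.sum_range_succ]
  have hsum2 : ∑ m ∈ Finset.range Q, (Nat.floor (z * m) + 1)
      ≤ ∑ m ∈ Finset.range Q, (P * m / Q + 1) := by
    apply Finset.sum_le_sum
    intro m hm
    rw [Finset.mem_range] at hm
    exact Nat.add_le_add_right (hfloor m hm) 1
  have hsum3 : ∑ m ∈ Finset.range Q, (P * m / Q + 1)
      = (∑ m ∈ Finset.range Q, P * m / Q) + Q := by
    rw [Finset.sum_add_distrib, Finset.sum_const, Finset.card_range, smul_eq_mul, mul_one]
  have hkey := sum_div_twice hPpos hQpos (g_coprime n hn)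
  have hid : P * Q = M * M + 1 := g_id n
  have hrec : P + Q = 3 * M := g_rec n
  have hN : latticeCount z 0 Q ≤ (∑ m ∈ Finset.range Q, P * m / Q) + Q + P := by
    omega
  have hfin : 2 * latticeCount z 0 Q ≤ M * M + 3 * M + 2 := by
    omega
  calc 2 * latticeCount z 0 Q ≤ M * M + 3 * M + 2 := hfin
    _ = (M + 1) * (M + 2) := by ring

lemma key_bound (n : ℕ) (hn : 1 ≤ n) (z : ℝ) (hz0 : 0 < z)
    (hzb : z < (g (n+2) : ℝ) / (g n)) :
    z * (g n) / (g (n+1)) ≤ kABval z 0 (g n) := by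
  have hMpos : 0 < g (n+1) := g_pos _
  have hQpos : 0 < g n := g_pos _
  have hmem : g (n+1) ∈ {d : ℕ | 0 < d ∧ 2 * latticeCount z 0 (g n) ≤ (d+1)*(d+2)} :=
    ⟨hMpos, count_bound n hn z hz0 hzb⟩
  have hdle : ddeg z 0 (g n) ≤ g (n+1) := Nat.sInf_le hmem
  have hdmem := Nat.sInf_mem (⟨g (n+1), hmem⟩ : Set.Nonempty _)
  have hdpos : 0 < ddeg z 0 (g n) := hdmem.1
  rw [kABval]
  simp only [Nat.cast_zero, zero_add]
  apply div_le_div_of_nonneg_left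
  · positivity
  · exact_mod_cast hdpos
  · exact_mod_cast hdle

/-- Lemma `le:ECH2`. -/
theorem ech_fibonacci_bound (n : ℕ) (hn : 1 ≤ n) :
    (∃ ε > (0 : ℝ), ∀ z : ℝ, Irrational z →
      (g (n+2) : ℝ)/(g n) - ε < z → z < (g (n+2) : ℝ)/(g n) →
        z * (g n) / (g (n+1)) ≤ kABval z 0 (g n)) ∧
    (∀ δ > (0 : ℝ), ∃ z : ℝ, Irrational z ∧ z < (g (n+2) : ℝ)/(g n) ∧
      (g (n+2) : ℝ)/(g (n+1)) - δ < kABval z 0 (g n)) := by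
  have hQpos : (0:ℝ) < (g n : ℝ) := by exact_mod_cast g_pos n
  have hMpos : (0:ℝ) < (g (n+1) : ℝ) := by exact_mod_cast g_pos (n+1)
  have hPQ : g n < g (n+2) := by
    obtain ⟨m, rfl⟩ : ∃ m, n = m + 1 := ⟨n - 1, by omega⟩
    show Nat.fib (2*m+1) < Nat.fib (2*(m+2)+1)
    have h1 : Nat.fib (2*m+1) ≤ Nat.fib (2*m+4) := Nat.fib_mono (by omega)
    have h2 : Nat.fib (2*m+4) < Nat.fib (2*m+5) := Nat.fib_lt_fib_succ (by omega)
    have e : 2*(m+2)+1 = 2*m+5 := by ring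
    rw [e]; omega
  have hb1 : (1:ℝ) < (g (n+2) : ℝ) / (g n) := by
    rw [lt_div_iff₀ hQpos]
    simp only [one_mul]
    exact_mod_cast hPQ
  constructor
  · refine ⟨1, by norm_num, fun z _ hz1 hz2 => ?_⟩
    have hz0 : 0 < z := by linarith
    exact key_bound n hn z hz0 hz2
  · intro δ hδ
    set b : ℝ := (g (n+2) : ℝ) / (g n) with hb
    have hl1 : b - 1 < b := by linarith
    have hl2 : b - δ * (g (n+1) : ℝ) / (g n : ℝ) < b := by
      have : 0 < δ * (g (n+1) : ℝ) / (g n : ℝ) := by positivity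
      linarith
    obtain ⟨z, hzirr, hzl, hzr⟩ :=
      exists_irrational_btwn (max_lt hl1 hl2 : max (b - 1) (b - δ * (g (n+1) : ℝ) / (g n : ℝ)) < b)
    have hz1 : b - 1 < z := lt_of_le_of_lt (le_max_left _ _) hzl
    have hz2 : b - δ * (g (n+1) : ℝ) / (g n : ℝ) < z := lt_of_le_of_lt (le_max_right _ _) hzl
    have hz0 : 0 < z := by linarith
    refine ⟨z, hzirr, hzr, ?_⟩
    have hk := key_bound n hn z hz0 hzr
    have hlast : (g (n+2) : ℝ)/(g (n+1)) - δ < z * (g n) / (g (n+1)) := by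
      rw [div_sub' (ne_of_gt hMpos), div_lt_div_iff₀ hMpos hMpos]
      have hbz : (g (n+2) : ℝ) - δ * (g (n+1)) < z * (g n) := by
        have h3 : (b - δ * (g (n+1) : ℝ) / (g n : ℝ)) * (g n : ℝ) < z * (g n) :=
          mul_lt_mul_of_pos_right hz2 hQpos
        have h4 : (b - δ * (g (n+1) : ℝ) / (g n : ℝ)) * (g n : ℝ)
            = (g (n+2) : ℝ) - δ * (g (n+1)) := by
          rw [hb]
          field_simp
        linarith
      nlinarith [hbz, hMpos]
    linarith
end

section
/- For every irrational a > 1 and every ε > 0 there exists a positive integer s such that k_{s,0}(a) ≥ √a − ε; that is, the embedded-contact-homology lower bound satisfies c_{ECH}(a) ≥ √a. -/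
lemma latticeCount_le (a : ℝ) (h1 : 1 < a) (s : ℕ) :
    (latticeCount a s 0 : ℝ) ≤ ((s:ℝ) + a + 1)^2 / (2*a) := by
  have ha0 : (0:ℝ) < a := lt_trans one_pos h1
  set m : ℕ := ⌊(s:ℝ)/a⌋₊ with hm
  set F : Finset (ℤ × ℤ) :=
    (Finset.Icc (0:ℤ) (s:ℤ) ×ˢ Finset.Icc (0:ℤ) (m:ℤ)).filter
      (fun p => (p.1 : ℝ) + a * p.2 ≤ (s:ℝ)) with hF
  have hset : {xy : ℤ × ℤ | 0 ≤ xy.1 ∧ 0 ≤ xy.2 ∧ (xy.1 : ℝ) + a * xy.2 ≤ (s : ℝ) + a * (0:ℕ)}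
      = ↑F := by
    ext ⟨x, y⟩
    simp only [Set.mem_setOf_eq, hF, Finset.coe_filter, Finset.mem_product, Finset.mem_Icc,
      Nat.cast_zero, mul_zero, add_zero, Finset.mem_coe, Finset.mem_filter]
    constructor
    · rintro ⟨hx, hy, hxy⟩
      have hyr : (0:ℝ) ≤ (y:ℝ) := by exact_mod_cast hy
      have hay : (0:ℝ) ≤ a * y := mul_nonneg ha0.le hyr
      have hxr : (0:ℝ) ≤ (x:ℝ) := by exact_mod_cast hx
      have hxs : (x:ℝ) ≤ s := by linarith
      have hys : (y:ℝ) ≤ (s:ℝ)/a := by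
        rw [le_div_iff₀ ha0]; nlinarith
      have hym : y ≤ (m:ℤ) := by
        have h1 : y.toNat ≤ m := by
          apply Nat.le_floor
          have h2 : ((y.toNat : ℤ) : ℝ) ≤ (s:ℝ)/a := by
            rw [Int.toNat_of_nonneg hy]; exact hys
          exact_mod_cast h2
        omega
      exact ⟨⟨⟨hx, by exact_mod_cast hxs⟩, hy, hym⟩, hxy⟩
    · rintro ⟨⟨⟨hx, _⟩, hy, _⟩, hxy⟩
      exact ⟨hx, hy, by simpa using hxy⟩
  have hcount : latticeCount a s 0 = F.card := by
    rw [latticeCount, hset, Set.ncard_coe_finset]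
  -- fiberwise count over y.toNat ∈ range (m+1)
  have hfib : F.card = ∑ i ∈ Finset.range (m+1), (F.filter (fun p => p.2.toNat = i)).card := by
    apply Finset.card_eq_sum_card_fiberwise
    intro p hp
    simp only [hF, Finset.mem_coe, Finset.mem_filter, Finset.mem_product, Finset.mem_Icc] at hp
    have := hp.1.2
    simp only [Finset.mem_coe, Finset.mem_range]
    omega
  have hrow : ∀ i ∈ Finset.range (m+1),
      ((F.filter (fun p => p.2.toNat = i)).card : ℝ) ≤ (s:ℝ) + 1 - a * i := by
    intro i hi
    have him : i ≤ m := by simpa [Nat.lt_succ_iff] using hi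
    have his : a * i ≤ s := by
      have h1 : (i:ℝ) ≤ (s:ℝ)/a := le_trans (by exact_mod_cast him) (Nat.floor_le (by positivity))
      rw [le_div_iff₀ ha0] at h1; linarith [h1]
    have hsub : (F.filter (fun p => p.2.toNat = i)).card ≤
        (Finset.Icc (0:ℤ) ⌊(s:ℝ) - a * i⌋).card := by
      apply Finset.card_le_card_of_injOn (fun p => p.1)
      · intro p hp
        simp only [hF, Finset.mem_coe, Finset.mem_filter, Finset.mem_product, Finset.mem_Icc] at hp ⊢
        obtain ⟨⟨⟨⟨hx0, _⟩, hy0, _⟩, hxy⟩, hpy⟩ := hp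
        have hpy2 : (p.2 : ℝ) = i := by
          have hpz : p.2 = (i:ℤ) := by omega
          rw [hpz]; push_cast; ring
        refine ⟨hx0, ?_⟩
        apply Int.le_floor.mpr
        rw [hpy2] at hxy
        push_cast
        linarith
      · intro p hp q hq hpq
        simp only [hF, Finset.mem_coe, Finset.mem_filter, Finset.mem_product,
          Finset.mem_Icc] at hp hq
        obtain ⟨⟨⟨_, hpy0, _⟩, _⟩, hpi⟩ := hp
        obtain ⟨⟨⟨_, hqy0, _⟩, _⟩, hqi⟩ := hq
        have h2 : p.2 = q.2 := by omega
        exact Prod.ext hpq h2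
    have hIcc : ((Finset.Icc (0:ℤ) ⌊(s:ℝ) - a * i⌋).card : ℝ) ≤ (s:ℝ) + 1 - a * i := by
      rw [Int.card_Icc]
      have hfl0 : (0:ℤ) ≤ ⌊(s:ℝ) - a * i⌋ := Int.floor_nonneg.mpr (by linarith)
      have : ((⌊(s:ℝ) - a * i⌋ + 1 - 0).toNat : ℝ) = (⌊(s:ℝ) - a * i⌋ : ℝ) + 1 := by
        have h2 : ((⌊(s:ℝ) - a * i⌋ + 1 - 0).toNat : ℤ) = ⌊(s:ℝ) - a * i⌋ + 1 := by omega
        exact_mod_cast congrArg (Int.cast : ℤ → ℝ) h2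
      rw [this]
      have := Int.floor_le ((s:ℝ) - a * i)
      linarith
    calc ((F.filter (fun p => p.2.toNat = i)).card : ℝ)
        ≤ ((Finset.Icc (0:ℤ) ⌊(s:ℝ) - a * i⌋).card : ℝ) := by exact_mod_cast hsub
      _ ≤ (s:ℝ) + 1 - a * i := hIcc
  have hsum : (F.card : ℝ) ≤ ∑ i ∈ Finset.range (m+1), ((s:ℝ) + 1 - a * i) := by
    rw [hfib]
    push_cast
    exact Finset.sum_le_sum hrow
  have hgauss : ∑ i ∈ Finset.range (m+1), ((s:ℝ) + 1 - a * i)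
      = (m+1) * ((s:ℝ)+1) - a * (m * (m+1) / 2) := by
    rw [Finset.sum_sub_distrib, Finset.sum_const, Finset.card_range, ← Finset.mul_sum]
    have hg : ∑ i ∈ Finset.range (m+1), (i:ℝ) = (m:ℝ) * (m+1) / 2 := by
      have h2 : (∑ i ∈ Finset.range (m+1), i) * 2 = (m+1) * m := Finset.sum_range_id_mul_two (m+1)
      have h3 : ((∑ i ∈ Finset.range (m+1), i : ℕ) : ℝ) * 2 = ((m:ℝ)+1) * m := by
        exact_mod_cast congrArg (Nat.cast : ℕ → ℝ) h2
      push_cast at h3 ⊢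
      linarith
    rw [hg]
    push_cast
    ring
  have hfinal : ((m:ℝ)+1) * ((s:ℝ)+1) - a * ((m:ℝ) * (m+1) / 2) ≤ ((s:ℝ) + a + 1)^2 / (2*a) := by
    rw [le_div_iff₀ (by positivity : (0:ℝ) < 2*a)]
    have hu0 : (0:ℝ) ≤ (m:ℝ) := Nat.cast_nonneg m
    have hu1 : a * (m:ℝ) ≤ s := by
      have := Nat.floor_le (show (0:ℝ) ≤ (s:ℝ)/a by positivity)
      rw [← hm] at this
      rw [le_div_iff₀ ha0] at this
      linarith
    have hs0 : (0:ℝ) ≤ (s:ℝ) := Nat.cast_nonneg s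
    nlinarith [sq_nonneg (a * (m:ℝ) + a - (s:ℝ) - 1 - a/2), sq_nonneg ((s:ℝ)+1+a/2), mul_nonneg hs0 ha0.le]
  calc (latticeCount a s 0 : ℝ) = (F.card : ℝ) := by rw [hcount]
    _ ≤ ∑ i ∈ Finset.range (m+1), ((s:ℝ) + 1 - a * i) := hsum
    _ = ((m:ℝ)+1) * ((s:ℝ)+1) - a * ((m:ℝ) * (m+1) / 2) := by rw [hgauss]
    _ ≤ ((s:ℝ) + a + 1)^2 / (2*a) := hfinal

/-- Lemma `le:0`: for every irrational `a > 1` and every `ε > 0` there is a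
positive integer `s` with `k_{s,0}(a) ≥ √a − ε`; that is, `c_ECH(a) ≥ √a`. -/
theorem ech_volume_bound (a : ℝ) (ha : Irrational a) (h1 : 1 < a)
    (ε : ℝ) (hε : 0 < ε) :
    ∃ s : ℕ, 0 < s ∧ Real.sqrt a - ε ≤ kABval a s 0 := by
  have ha0 : (0:ℝ) < a := lt_trans one_pos h1
  set q : ℝ := Real.sqrt a with hq
  have hq0 : 0 < q := Real.sqrt_pos.mpr ha0
  have hq2 : q^2 = a := Real.sq_sqrt ha0.le
  set C : ℝ := q * (a + 1 + q) / ε with hC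
  refine ⟨max 1 ⌈C⌉₊, lt_of_lt_of_le one_pos (le_max_left _ _), ?_⟩
  set s : ℕ := max 1 ⌈C⌉₊ with hs
  have hceil : ⌈C⌉₊ ≤ s := le_max_right _ _
  have hsC : C ≤ (s:ℝ) := le_trans (Nat.le_ceil C) (Nat.cast_le.mpr hceil)
  have hs0 : (0:ℝ) ≤ (s:ℝ) := Nat.cast_nonneg s
  -- pick d
  set d : ℕ := ⌈((s:ℝ) + a + 1)/q⌉₊ with hd
  have hdpos : 0 < d := Nat.ceil_pos.mpr (by positivity)
  have hdlow : ((s:ℝ) + a + 1)/q ≤ (d:ℝ) := Nat.le_ceil _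
  have hdhigh : (d:ℝ) ≤ ((s:ℝ) + a + 1)/q + 1 :=
    le_of_lt (Nat.ceil_lt_add_one (by positivity))
  have hmemd : d ∈ {d : ℕ | 0 < d ∧ 2 * latticeCount a s 0 ≤ (d+1)*(d+2)} := by
    refine ⟨hdpos, ?_⟩
    have hNR : (latticeCount a s 0 : ℝ) ≤ ((s:ℝ) + a + 1)^2 / (2*a) := latticeCount_le a h1 s
    have hdsq : ((s:ℝ) + a + 1)^2 / a ≤ (d:ℝ) * (d:ℝ) := by
      have h2 : ((s:ℝ) + a + 1)/q ≤ (d:ℝ) := hdlow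
      have h3 : (((s:ℝ) + a + 1)/q) * (((s:ℝ) + a + 1)/q) ≤ (d:ℝ) * (d:ℝ) :=
        mul_le_mul h2 h2 (by positivity) (Nat.cast_nonneg d)
      calc ((s:ℝ) + a + 1)^2 / a = (((s:ℝ) + a + 1)/q) * (((s:ℝ) + a + 1)/q) := by
            rw [div_mul_div_comm, ← sq, ← sq, hq2]
        _ ≤ (d:ℝ) * (d:ℝ) := h3
    have h4 : ((s:ℝ)+a+1)^2/(2*a) * 2 = ((s:ℝ)+a+1)^2/a := by
      field_simp
    have hR : (2 * latticeCount a s 0 : ℝ) ≤ ((d:ℝ)+1) * ((d:ℝ)+2) := by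
      push_cast
      nlinarith [(Nat.cast_nonneg d : (0:ℝ) ≤ (d:ℝ)), h4, hNR, hdsq]
    exact_mod_cast hR
  have hddle : ddeg a s 0 ≤ d := Nat.sInf_le hmemd
  have hddmem : ddeg a s 0 ∈ {d : ℕ | 0 < d ∧ 2 * latticeCount a s 0 ≤ (d+1)*(d+2)} :=
    Nat.sInf_mem ⟨d, hmemd⟩
  have hddpos : 0 < ddeg a s 0 := hddmem.1
  have hk : kABval a s 0 = (s:ℝ) / (ddeg a s 0 : ℝ) := by
    simp [kABval]
  rw [hk]
  have hddR : (0:ℝ) < (ddeg a s 0 : ℝ) := by exact_mod_cast hddpos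
  have hstep1 : (s:ℝ) / (d:ℝ) ≤ (s:ℝ) / (ddeg a s 0 : ℝ) :=
    div_le_div_of_nonneg_left hs0 hddR (by exact_mod_cast hddle)
  set D : ℝ := ((s:ℝ) + a + 1)/q + 1 with hD
  have hD0 : 0 < D := by positivity
  have hdR : (0:ℝ) < (d:ℝ) := by exact_mod_cast hdpos
  have hstep2 : (s:ℝ) / D ≤ (s:ℝ) / (d:ℝ) :=
    div_le_div_of_nonneg_left hs0 hdR hdhigh
  have hstep3 : q - ε ≤ (s:ℝ) / D := by
    rw [le_div_iff₀ hD0]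
    have hqD : q * D = (s:ℝ) + a + 1 + q := by
      rw [hD]; field_simp
    have hεs : q * (a + 1 + q) ≤ ε * s := by
      have := mul_le_mul_of_nonneg_left hsC hε.le
      rw [hC] at this
      rw [mul_div_assoc'] at this
      rw [mul_comm ε (q * (a+1+q))] at this
      have h5 := (div_le_iff₀ hε).mp (by linarith [this] : q * (a+1+q) / ε ≤ (s:ℝ))
      linarith [h5]
    have hεD : a + 1 + q ≤ ε * D := by
      have h6 : (a + 1 + q) ≤ ε * ((s:ℝ)/q) := by
        rw [← mul_div_assoc, le_div_iff₀ hq0]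
        nlinarith
      have h7 : (s:ℝ)/q ≤ D := by
        rw [hD]
        have : (s:ℝ)/q ≤ ((s:ℝ) + a + 1)/q := by
          gcongr
          linarith
        linarith
      nlinarith
    nlinarith [hqD, hεD]
  linarith
end

section
/- For every n ≥ 1, the tuple (d; m₁, …, m_{M+1}) := (g_n·g_{n+1}; W(g_{n+1}², g_n²), 1) — the label sequence of the pair (g_{n+1}², g_n²) followed by one extra entry equal to 1 — satisfies the two Diophantine conditions d² + 1 = Σ_{i} m_i² and 3d − 1 = Σ_{i} m_i. -/
/-- The label sequence `W(p,q)`, defined by the Euclidean recursion: if `q ∣ p` then `q`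
repeated `p/q` times; otherwise `q` repeated `⌊p/q⌋` times followed by `W q (p % q)`. -/
def W (p q : ℕ) : List ℕ :=
  if hq : q = 0 then []
  else if p % q = 0 then List.replicate (p / q) q
  else List.replicate (p / q) q ++ W q (p % q)
termination_by q
decreasing_by exact Nat.mod_lt _ (Nat.pos_of_ne_zero hq)

lemma W_sum_sq : ∀ q, 0 < q → ∀ p, ((W p q).map (fun m => m^2)).sum = p * q := by
  intro q
  induction q using Nat.strong_induction_on with
  | _ q ih =>
    intro hq p
    rw [W, dif_neg hq.ne']
    by_cases h : p % q = 0
    · rw [if_pos h]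
      simp [List.sum_replicate, smul_eq_mul]
      have hd : p / q * q = p := Nat.div_mul_cancel ((Nat.dvd_of_mod_eq_zero h))
      calc p / q * q ^ 2 = (p / q * q) * q := by ring
        _ = p * q := by rw [hd]
    · rw [if_neg h]
      have ihr := ih (p % q) (Nat.mod_lt _ hq) (Nat.pos_of_ne_zero h) q
      simp [List.sum_replicate, smul_eq_mul, ihr]
      have hd : q * (p / q) + p % q = p := Nat.div_add_mod p q
      calc p / q * q ^ 2 + q * (p % q) = (q * (p / q) + p % q) * q := by ring
        _ = p * q := by rw [hd]

lemma W_sum : ∀ q, 0 < q → ∀ p, (W p q).sum + Nat.gcd q p = p + q := by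
  intro q
  induction q using Nat.strong_induction_on with
  | _ q ih =>
    intro hq p
    rw [W, dif_neg hq.ne', Nat.gcd_rec q p]
    by_cases h : p % q = 0
    · rw [if_pos h, h]
      simp [List.sum_replicate, smul_eq_mul]
      have hd : p / q * q = p := Nat.div_mul_cancel ((Nat.dvd_of_mod_eq_zero h))
      omega
    · rw [if_neg h]
      have ihr := ih (p % q) (Nat.mod_lt _ hq) (Nat.pos_of_ne_zero h) q
      have hd : q * (p / q) + p % q = p := Nat.div_add_mod p q
      simp [List.sum_replicate, smul_eq_mul]
      have hd2 : p / q * q = q * (p / q) := Nat.mul_comm _ _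
      omega

lemma cassini : ∀ k, Nat.fib (2*k+1) * Nat.fib (2*k+3) = Nat.fib (2*k+2)^2 + 1 := by
  intro k
  induction k with
  | zero => decide
  | succ k ih =>
    set a := Nat.fib (2*k+1) with ha
    set b := Nat.fib (2*k+2) with hb
    have hc3 : Nat.fib (2*k+3) = a + b := by
      rw [show 2*k+3 = (2*k+1)+2 from by ring, Nat.fib_add_two]
    have hc4 : Nat.fib (2*k+4) = b + (a + b) := by
      rw [show 2*k+4 = (2*k+2)+2 from by ring, Nat.fib_add_two, hc3]
    have hc5 : Nat.fib (2*k+5) = (a + b) + (b + (a + b)) := by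
      rw [show 2*k+5 = (2*k+3)+2 from by ring, Nat.fib_add_two, hc3, hc4]
    rw [hc3] at ih
    rw [show 2*(k+1)+1 = 2*k+3 from by ring, show 2*(k+1)+3 = 2*k+5 from by ring,
        show 2*(k+1)+2 = 2*k+4 from by ring, hc3, hc4, hc5]
    nlinarith [ih]

/-- the tuple `E(a_n) = (g_n·g_{n+1}; W(g_{n+1}², g_n²), 1)` satisfies the
Diophantine conditions `d² + 1 = Σ mᵢ²` and `3d − 1 = Σ mᵢ`. -/
theorem Ean_diophantine (n : ℕ) (hn : 1 ≤ n) :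
    (g n * g (n+1))^2 + 1 = (((W ((g (n+1))^2) ((g n)^2)) ++ [1]).map (fun m => m^2)).sum ∧
    3 * (g n * g (n+1)) - 1 = ((W ((g (n+1))^2) ((g n)^2)) ++ [1]).sum := by
  obtain ⟨m, rfl⟩ : ∃ m, n = m + 1 := ⟨n - 1, by omega⟩
  have hg1 : g (m+1) = Nat.fib (2*m+1) := rfl
  have hg2 : g (m+2) = Nat.fib (2*m+3) := by show Nat.fib (2*(m+1)+1) = _; ring_nf
  set a := Nat.fib (2*m+1) with ha
  set c := Nat.fib (2*m+3) with hc
  have hapos : 0 < a := Nat.fib_pos.2 (by omega)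
  have hq : 0 < a^2 := by positivity
  have hco : Nat.Coprime a c := by
    have h13 : Nat.Coprime (2*m+1) (2*m+3) := by
      have h : 2*m+3 = 2 + (2*m+1) := by ring
      rw [h, Nat.coprime_add_self_right, Nat.coprime_two_right]
      exact ⟨m, by ring⟩
    unfold Nat.Coprime
    rw [ha, hc, ← Nat.fib_gcd, h13, Nat.fib_one]
  have hgcd : Nat.gcd (a^2) (c^2) = 1 :=
    Nat.Coprime.gcd_eq_one (Nat.Coprime.pow _ _ hco)
  have hcas : a * c = Nat.fib (2*m+2)^2 + 1 := cassini m
  have hfc : c = Nat.fib (2*m+2) + a := by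
    rw [hc, ha, show 2*m+3 = (2*m+1)+2 from by ring, Nat.fib_add_two]; ring
  have key : 3 * (a * c) = c^2 + a^2 + 1 := by nlinarith [hcas, hfc]
  constructor
  · rw [hg1, hg2, List.map_append, List.sum_append,
      W_sum_sq (a^2) hq (c^2)]
    simp
    ring
  · rw [hg1, hg2, List.sum_append]
    simp only [List.sum_cons, List.sum_nil]
    have hs := W_sum (a^2) hq (c^2)
    rw [hgcd] at hs
    omega
end

section
/- For every n ≥ 3, a sequence of five Cremona moves transforms the tuple E(b_n) := (g_{n+1}; W(g_{n+2}, g_n)) into the tuple E(b_{n−2}) := (g_{n−1}; W(g_n, g_{n−2})). -/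
/-- A Cremona move on a tuple `(d; m₁, m₂, …)` (entries padded by zeros so that at least three
are present): pass to `(2d − m₁ − m₂ − m₃; d − m₂ − m₃, d − m₁ − m₃, d − m₁ − m₂, m₄, …)`,
then delete zero entries and reorder the entries after the semicolon in nonincreasing order. -/
def cremona : ℤ × List ℤ → ℤ × List ℤ :=
  fun t =>
    let d := t.1
    let m1 := t.2.getD 0 0
    let m2 := t.2.getD 1 0
    let m3 := t.2.getD 2 0
    let rest := ([d - m2 - m3, d - m1 - m3, d - m1 - m2] ++ t.2.drop 3).filter (· ≠ 0)
    (2*d - m1 - m2 - m3, rest.mergeSort (fun a b => decide (b ≤ a)))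

/- ### Auxiliary lemmas about `W` -/

lemma W_spec : ∀ q, ∀ p, 0 < q →
    (∀ z ∈ W p q, 0 < z ∧ z ≤ q) ∧ (W p q).Pairwise (fun x y : ℕ => y ≤ x) := by
  intro q
  induction q using Nat.strong_induction_on with
  | _ q ih =>
    intro p hq
    rw [W, dif_neg hq.ne']
    split_ifs with h
    · constructor
      · intro z hz
        rw [List.mem_replicate] at hz
        omega
      · rw [List.pairwise_replicate]
        right; exact le_refl q
    · have hlt : p % q < q := Nat.mod_lt _ hq
      have hmp : 0 < p % q := Nat.pos_of_ne_zero h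
      obtain ⟨ihm, ihs⟩ := ih (p % q) hlt q hmp
      constructor
      · intro z hz
        rcases List.mem_append.mp hz with h1 | h2
        · rw [List.mem_replicate] at h1; omega
        · have := ihm z h2
          exact ⟨this.1, this.2.trans hlt.le⟩
      · rw [List.pairwise_append]
        refine ⟨by rw [List.pairwise_replicate]; right; exact le_refl q, ihs, ?_⟩
        intro a ha bb hb
        rw [List.mem_replicate] at ha
        have := ihm bb hb
        omega

lemma W_cons (p q : ℕ) (hq : 0 < q) : W (p + q) q = q :: W p q := by
  conv_lhs => rw [W]
  conv_rhs => rw [W]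
  rw [dif_neg hq.ne', dif_neg hq.ne', Nat.add_mod_right, Nat.add_div_right p hq]
  split_ifs with h
  · rw [List.replicate_succ]
  · rw [List.replicate_succ, List.cons_append]

lemma W_rep (k q r : ℕ) (hr : 0 < r) (hrq : r < q) :
    W (k*q + r) q = List.replicate k q ++ W q r := by
  induction k with
  | zero =>
      have hq : 0 < q := hr.trans hrq
      rw [show 0*q + r = r by ring]
      rw [W, dif_neg hq.ne', Nat.mod_eq_of_lt hrq, if_neg hr.ne', Nat.div_eq_of_lt hrq]
  | succ k ihk =>
      rw [show (k+1)*q + r = (k*q + r) + q by ring, W_cons _ _ (hr.trans hrq), ihk,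
        List.replicate_succ, List.cons_append]

/- ### mergeSort helper -/

lemma msort (l r : List ℤ) (h : l.Perm r) (hr : r.Pairwise (fun x y : ℤ => y ≤ x)) :
    l.mergeSort (fun a b => decide (b ≤ a)) = r := by
  haveI : IsAntisymm ℤ (fun x y : ℤ => y ≤ x) := ⟨fun _ _ h1 h2 => le_antisymm h2 h1⟩
  refine List.Perm.eq_of_pairwise (le := fun x y : ℤ => y ≤ x)
    (fun _ _ _ _ h1 h2 => le_antisymm h2 h1) ?_ hr ((List.mergeSort_perm l _).trans h)
  have := List.pairwise_mergeSort (le := fun a b : ℤ => decide (b ≤ a))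
    (fun a b c h1 h2 => by simp only [decide_eq_true_eq] at *; exact le_trans h2 h1)
    (fun a b => by simp [le_total]) l
  exact this.imp (fun h => by simpa using h)

lemma perm_rot (l₁ l₂ t : List ℤ) : (l₁ ++ (l₂ ++ t)).Perm (l₂ ++ (l₁ ++ t)) := by
  rw [← List.append_assoc, ← List.append_assoc]
  exact List.perm_append_comm.append_right t

lemma cremona_eval (D m1 m2 m3 : ℤ) (rest : List ℤ) :
    cremona (D, m1::m2::m3::rest) = (2*D - m1 - m2 - m3,
      (([D - m2 - m3, D - m1 - m3, D - m1 - m2] ++ rest).filter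
        (· ≠ 0)).mergeSort (fun a b => decide (b ≤ a))) := rfl

/- ### The five Cremona steps -/

lemma sorted_helper (l T : List ℤ) (c : ℤ)
    (hl : l.Pairwise (fun x y : ℤ => y ≤ x)) (hT : T.Pairwise (fun x y : ℤ => y ≤ x))
    (hlc : ∀ x ∈ l, c ≤ x) (hTc : ∀ y ∈ T, y ≤ c) :
    (l ++ T).Pairwise (fun x y : ℤ => y ≤ x) :=
  List.pairwise_append.mpr ⟨hl, hT, fun a ha bb hb => (hTc bb hb).trans (hlc a ha)⟩

section steps
variable (b c : ℤ) (T : List ℤ)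
variable (hc : 1 ≤ c) (hbc : 2*c ≤ b)
variable (hT : T.Pairwise (fun x y : ℤ => y ≤ x)) (hTm : ∀ z ∈ T, 1 ≤ z ∧ z ≤ c)

include hc hbc hT hTm

lemma step1 :
    cremona (8*b-3*c, (3*b-c)::(3*b-c)::(3*b-c)::(3*b-c)::(3*b-c)::(3*b-c)::(3*b-2*c)::T)
      = (7*b-3*c, (3*b-c)::(3*b-c)::(3*b-c)::(3*b-2*c)::(2*b-c)::(2*b-c)::(2*b-c)::T) := by
  rw [cremona_eval]
  rw [show (8*b-3*c) - (3*b-c) - (3*b-c) = 2*b-c by ring]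
  rw [Prod.mk.injEq]
  refine ⟨by ring, ?_⟩
  have hfil : ((([2*b-c,2*b-c,2*b-c] : List ℤ)
        ++ ((3*b-c)::(3*b-c)::(3*b-c)::(3*b-2*c)::T)).filter (· ≠ 0))
      = ([2*b-c,2*b-c,2*b-c] : List ℤ) ++ ((3*b-c)::(3*b-c)::(3*b-c)::(3*b-2*c)::T) := by
    refine List.filter_eq_self.mpr ?_
    intro a ha
    simp only [List.cons_append, List.mem_cons, List.nil_append] at ha
    simp only [ne_eq, decide_eq_true_eq]
    rcases ha with h|h|h|h|h|h|h|h
    · omega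
    · omega
    · omega
    · omega
    · omega
    · omega
    · omega
    · have := hTm a h; omega
  rw [hfil]
  refine msort _ _ (perm_rot [2*b-c,2*b-c,2*b-c] [3*b-c,3*b-c,3*b-c,3*b-2*c] T) ?_
  refine sorted_helper [3*b-c,3*b-c,3*b-c,3*b-2*c,2*b-c,2*b-c,2*b-c] T c ?_ hT ?_
    (fun y hy => (hTm y hy).2)
  · simp [List.pairwise_cons]
    omega
  · intro x hx
    simp at hx
    rcases hx with h|h|h|h|h|h|h <;> omega

lemma step2 :
    cremona (7*b-3*c, (3*b-c)::(3*b-c)::(3*b-c)::(3*b-2*c)::(2*b-c)::(2*b-c)::(2*b-c)::T)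
      = (5*b-3*c, (3*b-2*c)::(2*b-c)::(2*b-c)::(2*b-c)::(b-c)::(b-c)::(b-c)::T) := by
  rw [cremona_eval]
  rw [show (7*b-3*c) - (3*b-c) - (3*b-c) = b-c by ring]
  rw [Prod.mk.injEq]
  refine ⟨by ring, ?_⟩
  have hfil : ((([b-c,b-c,b-c] : List ℤ)
        ++ ((3*b-2*c)::(2*b-c)::(2*b-c)::(2*b-c)::T)).filter (· ≠ 0))
      = ([b-c,b-c,b-c] : List ℤ) ++ ((3*b-2*c)::(2*b-c)::(2*b-c)::(2*b-c)::T) := by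
    refine List.filter_eq_self.mpr ?_
    intro a ha
    simp only [List.cons_append, List.mem_cons, List.nil_append] at ha
    simp only [ne_eq, decide_eq_true_eq]
    rcases ha with h|h|h|h|h|h|h|h
    · omega
    · omega
    · omega
    · omega
    · omega
    · omega
    · omega
    · have := hTm a h; omega
  rw [hfil]
  refine msort _ _ (perm_rot [b-c,b-c,b-c] [3*b-2*c,2*b-c,2*b-c,2*b-c] T) ?_
  refine sorted_helper [3*b-2*c,2*b-c,2*b-c,2*b-c,b-c,b-c,b-c] T c ?_ hT ?_
    (fun y hy => (hTm y hy).2)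
  · simp [List.pairwise_cons]
    omega
  · intro x hx
    simp at hx
    rcases hx with h|h|h|h|h|h|h <;> omega

lemma step3 :
    cremona (5*b-3*c, (3*b-2*c)::(2*b-c)::(2*b-c)::(2*b-c)::(b-c)::(b-c)::(b-c)::T)
      = (3*b-2*c, (2*b-c)::(b-c)::(b-c)::(b-c)::(b-c)::T) := by
  rw [cremona_eval]
  rw [show (5*b-3*c) - (2*b-c) - (2*b-c) = b-c by ring,
    show (5*b-3*c) - (3*b-2*c) - (2*b-c) = 0 by ring]
  rw [Prod.mk.injEq]
  refine ⟨by ring, ?_⟩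
  simp only [List.cons_append, List.nil_append]
  have hfil : ((((b-c) :: (0:ℤ) :: (0:ℤ) :: ((2*b-c)::(b-c)::(b-c)::(b-c)::T))).filter (· ≠ 0))
      = (b-c) :: ((2*b-c)::(b-c)::(b-c)::(b-c)::T) := by
    rw [List.filter_cons_of_pos (by simp only [ne_eq, decide_eq_true_eq]; omega),
      List.filter_cons_of_neg (by simp), List.filter_cons_of_neg (by simp)]
    congr 1
    refine List.filter_eq_self.mpr ?_
    intro a ha
    simp only [List.mem_cons] at ha
    simp only [ne_eq, decide_eq_true_eq]
    rcases ha with h|h|h|h|h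
    · omega
    · omega
    · omega
    · omega
    · have := hTm a h; omega
  rw [show ((b-c) :: (0:ℤ) :: (0:ℤ) :: ((2*b-c)::(b-c)::(b-c)::(b-c)::T)).filter (· ≠ 0)
      = (b-c) :: ((2*b-c)::(b-c)::(b-c)::(b-c)::T) from hfil]
  refine msort _ _ (perm_rot [b-c] [2*b-c] ((b-c)::(b-c)::(b-c)::T)) ?_
  refine sorted_helper [2*b-c,b-c,b-c,b-c,b-c] T c ?_ hT ?_ (fun y hy => (hTm y hy).2)
  · simp [List.pairwise_cons]
    omega
  · intro x hx
    simp at hx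
    rcases hx with h|h|h|h|h <;> omega

lemma step4 :
    cremona (3*b-2*c, (2*b-c)::(b-c)::(b-c)::(b-c)::(b-c)::T)
      = (2*b-c, b::(b-c)::(b-c)::T) := by
  rw [cremona_eval]
  rw [show (3*b-2*c) - (b-c) - (b-c) = b by ring,
    show (3*b-2*c) - (2*b-c) - (b-c) = 0 by ring]
  rw [Prod.mk.injEq]
  refine ⟨by ring, ?_⟩
  simp only [List.cons_append, List.nil_append]
  have hfil : (((b : ℤ) :: (0:ℤ) :: (0:ℤ) :: ((b-c)::(b-c)::T)).filter (· ≠ 0))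
      = b :: ((b-c)::(b-c)::T) := by
    rw [List.filter_cons_of_pos (by simp only [ne_eq, decide_eq_true_eq]; omega),
      List.filter_cons_of_neg (by simp), List.filter_cons_of_neg (by simp)]
    congr 1
    refine List.filter_eq_self.mpr ?_
    intro a ha
    simp only [List.mem_cons] at ha
    simp only [ne_eq, decide_eq_true_eq]
    rcases ha with h|h|h
    · omega
    · omega
    · have := hTm a h; omega
  rw [hfil]
  refine msort _ _ (List.Perm.refl _) ?_
  refine sorted_helper [b,b-c,b-c] T c ?_ hT ?_ (fun y hy => (hTm y hy).2)
  · simp [List.pairwise_cons]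
    omega
  · intro x hx
    simp at hx
    rcases hx with h|h|h <;> omega

lemma step5 :
    cremona (2*b-c, b::(b-c)::(b-c)::T) = (b, c::T) := by
  rw [cremona_eval]
  rw [show (2*b-c) - (b-c) - (b-c) = c by ring,
    show (2*b-c) - b - (b-c) = 0 by ring]
  rw [Prod.mk.injEq]
  refine ⟨by ring, ?_⟩
  simp only [List.cons_append, List.nil_append]
  have hfil : (((c : ℤ) :: (0:ℤ) :: (0:ℤ) :: T).filter (· ≠ 0)) = c :: T := by
    rw [List.filter_cons_of_pos (by simp only [ne_eq, decide_eq_true_eq]; omega),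
      List.filter_cons_of_neg (by simp), List.filter_cons_of_neg (by simp)]
    congr 1
    refine List.filter_eq_self.mpr ?_
    intro a ha
    simp only [ne_eq, decide_eq_true_eq]
    have := hTm a ha; omega
  rw [hfil]
  refine msort _ _ (List.Perm.refl _) ?_
  refine sorted_helper [c] T c ?_ hT ?_ (fun y hy => (hTm y hy).2)
  · simp
  · intro x hx
    simp at hx
    omega

lemma key :
    cremona^[5] (8*b-3*c,
        (3*b-c)::(3*b-c)::(3*b-c)::(3*b-c)::(3*b-c)::(3*b-c)::(3*b-2*c)::T)
      = (b, c::T) := by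
  have e : cremona^[5] (8*b-3*c,
        (3*b-c)::(3*b-c)::(3*b-c)::(3*b-c)::(3*b-c)::(3*b-c)::(3*b-2*c)::T)
      = cremona (cremona (cremona (cremona (cremona (8*b-3*c,
        (3*b-c)::(3*b-c)::(3*b-c)::(3*b-c)::(3*b-c)::(3*b-c)::(3*b-2*c)::T))))) := rfl
  rw [e, step1 b c T hc hbc hT hTm, step2 b c T hc hbc hT hTm, step3 b c T hc hbc hT hTm,
    step4 b c T hc hbc hT hTm, step5 b c T hc hbc hT hTm]

end steps

lemma mapcast (l : List ℕ) : (l.map (fun m => (m : ℤ))) = List.map (fun m : ℕ => (m : ℤ)) l := by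
  induction l with
  | nil => rfl
  | cons a t ih => simpa using ih

/-- for `n ≥ 3`, five Cremona moves transform
`E(b_n) = (g_{n+1}; W(g_{n+2}, g_n))` into `E(b_{n−2}) = (g_{n−1}; W(g_n, g_{n−2}))`. -/
theorem Ebn_five_cremona_moves (n : ℕ) (hn : 3 ≤ n) :
    cremona^[5] ((g (n+1) : ℤ), (W (g (n+2)) (g n)).map (fun m => (m : ℤ)))
      = ((g (n-1) : ℤ), (W (g n) (g (n-2))).map (fun m => (m : ℤ))) := by
  obtain ⟨m, rfl⟩ : ∃ m, n = m + 3 := ⟨n - 3, by omega⟩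
  rw [mapcast, mapcast]
  set x := Nat.fib (2*m+1) with hxdef
  set y := Nat.fib (2*m+2) with hydef
  have hx : 0 < x := Nat.fib_pos.mpr (by omega)
  have hy : 0 < y := Nat.fib_pos.mpr (by omega)
  have hxy : x ≤ y := by
    rw [hxdef, hydef, show 2*m+2 = (2*m+1)+1 by ring]
    exact Nat.fib_le_fib_succ
  have f3 : Nat.fib (2*m+3) = x + y := by
    rw [show 2*m+3 = (2*m+1)+2 by ring, Nat.fib_add_two, show 2*m+1+1 = 2*m+2 by ring]
  have f4 : Nat.fib (2*m+4) = x + 2*y := by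
    rw [show 2*m+4 = (2*m+2)+2 by ring, Nat.fib_add_two, show 2*m+2+1 = 2*m+3 by ring, f3]
    ring
  have f5 : Nat.fib (2*m+5) = 2*x + 3*y := by
    rw [show 2*m+5 = (2*m+3)+2 by ring, Nat.fib_add_two, show 2*m+3+1 = 2*m+4 by ring, f3, f4]
    ring
  have f6 : Nat.fib (2*m+6) = 3*x + 5*y := by
    rw [show 2*m+6 = (2*m+4)+2 by ring, Nat.fib_add_two, show 2*m+4+1 = 2*m+5 by ring, f4, f5]
    ring
  have f7 : Nat.fib (2*m+7) = 5*x + 8*y := by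
    rw [show 2*m+7 = (2*m+5)+2 by ring, Nat.fib_add_two, show 2*m+5+1 = 2*m+6 by ring, f5, f6]
    ring
  have f8 : Nat.fib (2*m+8) = 8*x + 13*y := by
    rw [show 2*m+8 = (2*m+6)+2 by ring, Nat.fib_add_two, show 2*m+6+1 = 2*m+7 by ring, f6, f7]
    ring
  have f9 : Nat.fib (2*m+9) = 13*x + 21*y := by
    rw [show 2*m+9 = (2*m+7)+2 by ring, Nat.fib_add_two, show 2*m+7+1 = 2*m+8 by ring, f7, f8]
    ring
  have hg1 : g (m+1) = x := rfl
  have hg2 : g (m+2) = x + y := by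
    rw [show g (m+2) = Nat.fib (2*(m+1)+1) from rfl, show 2*(m+1)+1 = 2*m+3 by ring, f3]
  have hg3 : g (m+3) = 2*x + 3*y := by
    rw [show g (m+3) = Nat.fib (2*(m+2)+1) from rfl, show 2*(m+2)+1 = 2*m+5 by ring, f5]
  have hg4 : g (m+4) = 5*x + 8*y := by
    rw [show g (m+4) = Nat.fib (2*(m+3)+1) from rfl, show 2*(m+3)+1 = 2*m+7 by ring, f7]
  have hg5 : g (m+5) = 13*x + 21*y := by
    rw [show g (m+5) = Nat.fib (2*(m+4)+1) from rfl, show 2*(m+4)+1 = 2*m+9 by ring, f9]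
  rw [show m+3+1 = m+4 by omega, show m+3+2 = m+5 by omega,
    show m+3-1 = m+2 by omega, show m+3-2 = m+1 by omega]
  have hW1 : W (g (m+5)) (g (m+3)) = List.replicate 6 (2*x+3*y) ++ ((x+3*y) :: W (x+3*y) x) := by
    rw [hg5, hg3, show 13*x+21*y = 6*(2*x+3*y) + (x+3*y) by ring,
      W_rep 6 _ _ (by omega) (by omega)]
    congr 1
    rw [show 2*x+3*y = 1*(x+3*y) + x by ring, W_rep 1 _ _ hx (by omega),
      List.replicate_one, List.singleton_append]
  have hW2 : W (g (m+3)) (g (m+1)) = x :: W (x+3*y) x := by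
    rw [hg3, hg1, show 2*x+3*y = (x+3*y) + x by ring, W_cons _ _ hx]
  rw [hW1, hW2]
  simp only [List.map_append, List.map_replicate, List.map_cons]
  obtain ⟨hTm0, hT0⟩ := W_spec x (x+3*y) hx
  have hT : (List.map (fun m : ℕ => (m : ℤ)) (W (x+3*y) x)).Pairwise (fun a b => b ≤ a) :=
    List.Pairwise.map _ (fun a b h => Int.ofNat_le.mpr h) hT0
  have hTm : ∀ z ∈ List.map (fun m : ℕ => (m : ℤ)) (W (x+3*y) x), 1 ≤ z ∧ z ≤ (x:ℤ) := by
    intro z hz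
    rw [List.mem_map] at hz
    obtain ⟨w, hw, rfl⟩ := hz
    have := hTm0 w hw
    omega
  have hkey := key ((x:ℤ)+(y:ℤ)) (x:ℤ) (List.map (fun m : ℕ => (m : ℤ)) (W (x+3*y) x))
    (by omega) (by omega) hT hTm
  rw [hg4, hg2]
  rw [show ((5*x+8*y : ℕ) : ℤ) = 8*((x:ℤ)+(y:ℤ)) - 3*(x:ℤ) by push_cast; ring,
    show ((2*x+3*y : ℕ) : ℤ) = 3*((x:ℤ)+(y:ℤ)) - (x:ℤ) by push_cast; ring,
    show ((x+3*y : ℕ) : ℤ) = 3*((x:ℤ)+(y:ℤ)) - 2*(x:ℤ) by push_cast; ring,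
    show ((x+y : ℕ) : ℤ) = (x:ℤ)+(y:ℤ) by push_cast; ring]
  exact hkey
end

section
/- For every n ≥ 0, the rational numbers a_n := (g_{n+1}/g_n)² and b_n := g_{n+2}/g_n satisfy a_n < b_n < a_{n+1}. -/
lemma fib3 (k : ℕ) : Nat.fib (2*k+3) = Nat.fib (2*k+1) + Nat.fib (2*k+2) := by
  rw [show 2*k+3 = (2*k+1)+2 by ring, Nat.fib_add_two, show 2*k+1+1 = 2*k+2 by ring]

lemma fib4 (k : ℕ) : Nat.fib (2*k+4) = Nat.fib (2*k+1) + 2*Nat.fib (2*k+2) := by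
  rw [show 2*k+4 = (2*k+2)+2 by ring, Nat.fib_add_two, show 2*k+2+1 = 2*k+3 by ring, fib3]
  ring

lemma fib5 (k : ℕ) : Nat.fib (2*k+5) = 2*Nat.fib (2*k+1) + 3*Nat.fib (2*k+2) := by
  rw [show 2*k+5 = (2*k+3)+2 by ring, Nat.fib_add_two, show 2*k+3+1 = 2*k+4 by ring,
    fib4, fib3]
  ring

lemma fib6 (k : ℕ) : Nat.fib (2*k+6) = 3*Nat.fib (2*k+1) + 5*Nat.fib (2*k+2) := by
  rw [show 2*k+6 = (2*k+4)+2 by ring, Nat.fib_add_two, show 2*k+4+1 = 2*k+5 by ring,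
    fib5, fib4]
  ring

lemma cassini_pair (n : ℕ) :
    Nat.fib (2*n+1) * Nat.fib (2*n+3) = Nat.fib (2*n+2)^2 + 1 ∧
    Nat.fib (2*n+2) * Nat.fib (2*n+4) + 1 = Nat.fib (2*n+3)^2 := by
  induction n with
  | zero => decide
  | succ k ih =>
    obtain ⟨h1, h2⟩ := ih
    rw [fib3] at h1 h2
    rw [fib4] at h2
    rw [show 2*(k+1)+1 = 2*k+3 by ring, show 2*(k+1)+2 = 2*k+4 by ring,
      show 2*(k+1)+3 = 2*k+5 by ring, show 2*(k+1)+4 = 2*k+6 by ring,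
      fib6, fib5, fib4, fib3]
    constructor <;> nlinarith [h1, h2]

lemma g_key (n : ℕ) : g n * g (n+2) = g (n+1)^2 + 1 := by
  cases n with
  | zero => decide
  | succ k =>
    show Nat.fib (2*k+1) * Nat.fib (2*(k+2)+1) = Nat.fib (2*(k+1)+1)^2 + 1
    have h1 := (cassini_pair k).1
    rw [fib3] at h1
    rw [show 2*(k+2)+1 = 2*k+5 by ring, show 2*(k+1)+1 = 2*k+3 by ring, fib5, fib3]
    nlinarith [h1]

/-- with `a_n := (g_{n+1}/g_n)²` and `b_n := g_{n+2}/g_n`, for every `n ≥ 0`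
one has `a_n < b_n < a_{n+1}`. -/
theorem an_lt_bn_lt_a_succ (n : ℕ) :
    ((g (n+1) : ℝ)/(g n))^2 < (g (n+2) : ℝ)/(g n) ∧
    (g (n+2) : ℝ)/(g n) < ((g (n+2) : ℝ)/(g (n+1)))^2 := by
  have hA : (0:ℝ) < g n := by exact_mod_cast g_pos n
  have hB : (0:ℝ) < g (n+1) := by exact_mod_cast g_pos (n+1)
  have hC : (0:ℝ) < g (n+2) := by exact_mod_cast g_pos (n+2)
  have hkey : (g n : ℝ) * g (n+2) = (g (n+1):ℝ)^2 + 1 := by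
    exact_mod_cast g_key n
  constructor
  · rw [div_pow, div_lt_div_iff₀ (by positivity) hA]
    nlinarith
  · rw [div_pow, div_lt_div_iff₀ hA (by positivity)]
    nlinarith
end

section
/- For every n ≥ 1, the number of lattice points in the closed triangle with vertices (0,0), (g_{n+2},0) and (0,g_n), i.e. #{(x,y) ∈ ℤ² : x ≥ 0, y ≥ 0, g_n·x + g_{n+2}·y ≤ g_n·g_{n+2}}, equals (g_n + 1)(g_{n+2} + 1)/2 + 1, which also equals (g_{n+1}² + 3·g_{n+1})/2 + 2. -/
open Finset

lemma tri_count (a b : ℕ) (ha : 0 < a) (hb : 0 < b) (hab : Nat.Coprime a b) :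
    Set.ncard {xy : ℤ × ℤ | 0 ≤ xy.1 ∧ 0 ≤ xy.2 ∧
        (a : ℤ) * xy.1 + (b : ℤ) * xy.2 ≤ (a : ℤ) * (b : ℤ)} * 2
      = (a + 1) * (b + 1) + 2 := by
  set R : Finset (ℕ × ℕ) := Finset.range (b+1) ×ˢ Finset.range (a+1) with hR
  set T : Finset (ℕ × ℕ) := R.filter (fun p => a * p.1 + b * p.2 ≤ a * b) with hT
  set T' : Finset (ℕ × ℕ) := R.filter (fun p => a * b ≤ a * p.1 + b * p.2) with hT'
  set N : Finset (ℕ × ℕ) := R.filter (fun p => ¬ (a * p.1 + b * p.2 ≤ a * b)) with hN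
  set E : Finset (ℕ × ℕ) := R.filter (fun p => a * p.1 + b * p.2 = a * b) with hE
  -- Step A: the set is the image of T
  have hset : {xy : ℤ × ℤ | 0 ≤ xy.1 ∧ 0 ≤ xy.2 ∧
        (a : ℤ) * xy.1 + (b : ℤ) * xy.2 ≤ (a : ℤ) * (b : ℤ)}
      = ↑(T.image (fun p => ((p.1 : ℤ), (p.2 : ℤ)))) := by
    ext ⟨x, y⟩
    simp only [Set.mem_setOf_eq, coe_image, Set.mem_image, mem_coe, hT, mem_filter, hR,
      mem_product, mem_range, Prod.exists]
    constructor
    · rintro ⟨hx, hy, hle⟩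
      lift x to ℕ using hx
      lift y to ℕ using hy
      have hle' : a * x + b * y ≤ a * b := by exact_mod_cast hle
      refine ⟨x, y, ⟨⟨?_, ?_⟩, hle'⟩, rfl⟩
      · nlinarith [Nat.zero_le (b * y), hle']
      · nlinarith [Nat.zero_le (a * x), hle']
    · rintro ⟨p, q, ⟨⟨hp, hq⟩, hle⟩, h⟩
      obtain ⟨rfl, rfl⟩ : (p : ℤ) = x ∧ (q : ℤ) = y := by
        constructor <;> [exact congrArg Prod.fst h; exact congrArg Prod.snd h]
      exact ⟨by positivity, by positivity, by exact_mod_cast hle⟩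
  have hcard : Set.ncard {xy : ℤ × ℤ | 0 ≤ xy.1 ∧ 0 ≤ xy.2 ∧
        (a : ℤ) * xy.1 + (b : ℤ) * xy.2 ≤ (a : ℤ) * (b : ℤ)} = T.card := by
    rw [hset, Set.ncard_coe_finset, Finset.card_image_of_injective]
    intro p q hpq
    simp only [Prod.mk.injEq] at hpq
    exact Prod.ext (by exact_mod_cast hpq.1) (by exact_mod_cast hpq.2)
  -- Step B: T.card = T'.card via reflection
  have key : ∀ x y : ℕ, x ≤ b → y ≤ a →
      a * (b - x) + b * (a - y) = a * b - a * x + (a * b - b * y) := by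
    intro x y hx hy
    rw [Nat.mul_sub, Nat.mul_sub, Nat.mul_comm b a]
  have hrefl : T.card = T'.card := by
    apply Finset.card_bij (fun p _ => (b - p.1, a - p.2))
    · rintro ⟨x, y⟩ hxy
      simp only [hT, hR, mem_filter, mem_product, mem_range] at hxy
      obtain ⟨⟨hx, hy⟩, hle⟩ := hxy
      simp only [hT', hR, mem_filter, mem_product, mem_range]
      have hax : a * x ≤ a * b := Nat.mul_le_mul_left a (by omega)
      have hby : b * y ≤ a * b := by
        calc b * y ≤ b * a := Nat.mul_le_mul_left b (by omega)
        _ = a * b := Nat.mul_comm b a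
      refine ⟨⟨by omega, by omega⟩, ?_⟩
      rw [key x y (by omega) (by omega)]
      omega
    · rintro ⟨x, y⟩ hxy ⟨x', y'⟩ hxy' h
      simp only [hT, hR, mem_filter, mem_product, mem_range] at hxy hxy'
      simp only [Prod.mk.injEq] at h
      have : x = x' ∧ y = y' := by omega
      exact Prod.ext this.1 this.2
    · rintro ⟨x, y⟩ hxy
      simp only [hT', hR, mem_filter, mem_product, mem_range] at hxy
      obtain ⟨⟨hx, hy⟩, hge⟩ := hxy
      have hax : a * x ≤ a * b := Nat.mul_le_mul_left a (by omega)
      have hby : b * y ≤ a * b := by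
        calc b * y ≤ b * a := Nat.mul_le_mul_left b (by omega)
        _ = a * b := Nat.mul_comm b a
      refine ⟨(b - x, a - y), ?_, ?_⟩
      · simp only [hT, hR, mem_filter, mem_product, mem_range]
        refine ⟨⟨by omega, by omega⟩, ?_⟩
        rw [key x y (by omega) (by omega)]
        omega
      · simp only [Prod.mk.injEq]
        omega
  -- Step C: splitting
  have hTN : T.card + N.card = R.card := by
    rw [hT, hN]
    exact Finset.card_filter_add_card_filter_not _
  have hT'split : T' = E ∪ N := by
    ext ⟨x, y⟩
    simp only [hT', hE, hN, mem_union, mem_filter]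
    constructor
    · rintro ⟨hp, hge⟩
      rcases eq_or_lt_of_le hge with he | hlt
      · exact Or.inl ⟨hp, he.symm⟩
      · exact Or.inr ⟨hp, by omega⟩
    · rintro (⟨hp, he⟩ | ⟨hp, hn⟩) <;> exact ⟨hp, by omega⟩
  have hdisj : Disjoint E N := by
    rw [Finset.disjoint_left]
    rintro ⟨x, y⟩ h1 h2
    simp only [hE, mem_filter] at h1
    simp only [hN, mem_filter] at h2
    omega
  have hT'card : T'.card = E.card + N.card := by
    rw [hT'split, Finset.card_union_of_disjoint hdisj]
  -- Step D: E has exactly two elements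
  have hEeq : E = {(b, 0), (0, a)} := by
    ext ⟨x, y⟩
    simp only [hE, hR, mem_filter, mem_product, mem_range, mem_insert, mem_singleton,
      Prod.mk.injEq]
    constructor
    · rintro ⟨⟨hx, hy⟩, heq⟩
      have hcomm : b * a = a * b := Nat.mul_comm b a
      have hdvd : b ∣ a * x := by
        have h1 : b * y ≤ a * b := by omega
        have hy' : y ≤ a := by
          by_contra h
          push_neg at h
          nlinarith [h1]
        have : a * x = b * (a - y) := by
          rw [Nat.mul_sub]
          omega
        exact ⟨a - y, this⟩
      have hbx : b ∣ x := (Nat.Coprime.dvd_of_dvd_mul_left (hab.symm) hdvd)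
      obtain ⟨c, rfl⟩ := hbx
      have hc : c ≤ 1 := by
        by_contra h
        push_neg at h
        have : 2 * b ≤ b * c := by
          calc 2 * b = b * 2 := by ring
          _ ≤ b * c := Nat.mul_le_mul_left b h
        omega
      interval_cases c
      · right
        constructor
        · omega
        · have : b * y = a * b := by omega
          have : b * y = b * a := by omega
          exact (Nat.eq_of_mul_eq_mul_left hb this)
      · left
        have hbc : b * 1 = b := by ring
        constructor
        · omega
        · have h0 : a * (b * 1) = a * b := by ring
          have hby0 : b * y = 0 := by omega
          rcases Nat.mul_eq_zero.mp hby0 with h | h <;> omega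
    · rintro (⟨rfl, rfl⟩ | ⟨rfl, rfl⟩)
      · exact ⟨⟨by omega, by omega⟩, by ring⟩
      · exact ⟨⟨by omega, by omega⟩, by ring⟩
  have hEcard : E.card = 2 := by
    rw [hEeq]
    rw [Finset.card_insert_of_notMem, Finset.card_singleton]
    simp only [mem_singleton, Prod.mk.injEq]
    omega
  -- combine
  have hRcard : R.card = (b + 1) * (a + 1) := by
    rw [hR, Finset.card_product, Finset.card_range, Finset.card_range]
  rw [hcard]
  have : T.card + T.card = R.card + E.card := by
    rw [hrefl] ; omega
  rw [hRcard, hEcard] at this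
  have := this
  nlinarith [this]

lemma catal (k : ℕ) : Nat.fib (2*k+1) * Nat.fib (2*k+5) = Nat.fib (2*k+3)^2 + 1 := by
  induction k with
  | zero => decide
  | succ k ih =>
    have h1 : Nat.fib (2*k+3) = Nat.fib (2*k+1) + Nat.fib (2*k+2) := by
      rw [show 2*k+3 = (2*k+1)+2 by ring, Nat.fib_add_two]
    have h2 : Nat.fib (2*k+4) = Nat.fib (2*k+2) + Nat.fib (2*k+3) := by
      rw [show 2*k+4 = (2*k+2)+2 by ring, Nat.fib_add_two]
    have h3 : Nat.fib (2*k+5) = Nat.fib (2*k+3) + Nat.fib (2*k+4) := by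
      rw [show 2*k+5 = (2*k+3)+2 by ring, Nat.fib_add_two]
    have h4 : Nat.fib (2*k+6) = Nat.fib (2*k+4) + Nat.fib (2*k+5) := by
      rw [show 2*k+6 = (2*k+4)+2 by ring, Nat.fib_add_two]
    have h5 : Nat.fib (2*k+7) = Nat.fib (2*k+5) + Nat.fib (2*k+6) := by
      rw [show 2*k+7 = (2*k+5)+2 by ring, Nat.fib_add_two]
    rw [show 2*(k+1)+1 = 2*k+3 by ring, show 2*(k+1)+5 = 2*k+7 by ring,
        show 2*(k+1)+3 = 2*k+5 by ring]
    nlinarith [ih, h1, h2, h3, h4, h5]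

lemma sum3 (k : ℕ) : Nat.fib (2*k+1) + Nat.fib (2*k+5) = 3 * Nat.fib (2*k+3) := by
  have h1 : Nat.fib (2*k+3) = Nat.fib (2*k+1) + Nat.fib (2*k+2) := by
    rw [show 2*k+3 = (2*k+1)+2 by ring, Nat.fib_add_two]
  have h2 : Nat.fib (2*k+4) = Nat.fib (2*k+2) + Nat.fib (2*k+3) := by
    rw [show 2*k+4 = (2*k+2)+2 by ring, Nat.fib_add_two]
  have h3 : Nat.fib (2*k+5) = Nat.fib (2*k+3) + Nat.fib (2*k+4) := by
    rw [show 2*k+5 = (2*k+3)+2 by ring, Nat.fib_add_two]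
  omega

lemma copr (k : ℕ) : Nat.Coprime (Nat.fib (2*k+1)) (Nat.fib (2*k+5)) := by
  have hfib := Nat.fib_gcd (2*k+1) (2*k+5)
  have h4 : Nat.gcd (2*k+1) (2*k+5) ∣ 4 := by
    have := Nat.dvd_sub (Nat.gcd_dvd_right (2*k+1) (2*k+5)) (Nat.gcd_dvd_left (2*k+1) (2*k+5))
    simpa using this
  have hodd : Nat.gcd (2*k+1) (2*k+5) ∣ 2*k+1 := Nat.gcd_dvd_left _ _
  have hle : Nat.gcd (2*k+1) (2*k+5) ≤ 4 := Nat.le_of_dvd (by norm_num) h4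
  have hg : Nat.gcd (2*k+1) (2*k+5) = 1 := by
    interval_cases h : Nat.gcd (2*k+1) (2*k+5) <;> omega
  unfold Nat.Coprime
  rw [← hfib, hg, Nat.fib_one]

/-- for every `n ≥ 1`, the number of lattice points in the closed triangle with
vertices `(0,0)`, `(g_{n+2},0)`, `(0,g_n)` equals `(g_n+1)(g_{n+2}+1)/2 + 1`, which also
equals `(g_{n+1}² + 3·g_{n+1})/2 + 2` (the divisions are exact). -/
theorem fib_triangle_lattice_count (n : ℕ) (hn : 1 ≤ n) :
    Set.ncard {xy : ℤ × ℤ | 0 ≤ xy.1 ∧ 0 ≤ xy.2 ∧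
        (g n : ℤ) * xy.1 + (g (n+2) : ℤ) * xy.2 ≤ (g n : ℤ) * (g (n+2) : ℤ)}
      = (g n + 1) * (g (n+2) + 1) / 2 + 1 ∧
    (g n + 1) * (g (n+2) + 1) / 2 + 1 = ((g (n+1))^2 + 3 * g (n+1)) / 2 + 2 := by
  obtain ⟨k, rfl⟩ : ∃ k, n = k + 1 := ⟨n - 1, by omega⟩
  have hgdef1 : g (k+1) = Nat.fib (2*k+1) := rfl
  have hgdef2 : g (k+1+1) = Nat.fib (2*k+3) := by
    show Nat.fib (2*(k+1)+1) = Nat.fib (2*k+3); congr 1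
  have hgdef3 : g (k+1+2) = Nat.fib (2*k+5) := by
    show Nat.fib (2*(k+2)+1) = Nat.fib (2*k+5); congr 1
  set a := Nat.fib (2*k+1) with hA
  set b := Nat.fib (2*k+5) with hB
  set c := Nat.fib (2*k+3) with hC
  have ha : 0 < a := Nat.fib_pos.mpr (by omega)
  have hb : 0 < b := Nat.fib_pos.mpr (by omega)
  have hc : 0 < c := Nat.fib_pos.mpr (by omega)
  have hcat : a * b = c^2 + 1 := catal k
  have hsum : a + b = 3 * c := sum3 k
  have hcop : Nat.Coprime a b := copr k
  have hcount := tri_count a b ha hb hcop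
  have heven : 2 ∣ (a + 1) * (b + 1) := by
    rcases Nat.even_or_odd a with he | ho
    · have : ¬ (2 ∣ a) ∨ ¬ (2 ∣ b) := by
        by_contra h
        push_neg at h
        have := Nat.dvd_gcd h.1 h.2
        rw [hcop] at this
        omega
      rcases this with h | h
      · exact absurd (he.two_dvd) h
      · have hb' : Odd b := Nat.odd_iff.mpr (by omega)
        obtain ⟨m, hm⟩ := hb'
        exact ⟨(a+1)*(m+1), by rw [hm]; ring⟩
    · obtain ⟨m, hm⟩ := ho
      exact ⟨(m+1)*(b+1), by rw [hm]; ring⟩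
  rw [hgdef1, hgdef2, hgdef3]
  constructor
  · omega
  · have hceven : 2 ∣ c^2 + 3*c := by
      rcases Nat.even_or_odd c with he | ho
      · obtain ⟨m, hm⟩ := he
        exact ⟨2*m^2 + 3*m, by rw [hm]; ring⟩
      · obtain ⟨m, hm⟩ := ho
        exact ⟨2*m^2 + 5*m + 2, by rw [hm]; ring⟩
    have hprod : (a + 1) * (b + 1) = c^2 + 3*c + 2 := by
      have : (a+1)*(b+1) = a*b + (a+b) + 1 := by ring
      rw [this, hcat, hsum]
      ring
    omega
end

section
/- For all positive integers p ≥ q ≥ 1, the sum of the squares of the entries of the label sequence W(p,q) equals p·q. Equivalently, for a = p/q ≥ 1 in lowest terms, the weight expansion w(a) = (1/q)·W(p,q) satisfies Σ_i w_i² = a. -/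
/-- for all positive integers `p ≥ q ≥ 1`, the sum of the squares of the
entries of the label sequence `W(p,q)` equals `p·q` (equivalently, for `a = p/q` in lowest
terms the weight expansion `w(a) = (1/q)·W(p,q)` satisfies `Σ wᵢ² = a`). -/
theorem weight_expansion_sum_sq (p q : ℕ) (hq : 1 ≤ q) (hqp : q ≤ p) :
    ((W p q).map (fun m => m^2)).sum = p * q := by
  induction q using Nat.strong_induction_on generalizing p with
  | _ q ih =>
    have hq0 : q ≠ 0 := Nat.one_le_iff_ne_zero.mp hq
    rw [W]
    simp only [hq0, dite_false, if_neg, dif_neg]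
    by_cases hr : p % q = 0
    · simp [hr, Nat.div_mul_le_self]
      have h1 : p / q * q = p := Nat.div_mul_cancel (Nat.dvd_iff_mod_eq_zero.mpr hr)
      nlinarith [h1]
    · simp only [hr, if_false, List.map_append, List.sum_append, List.map_replicate,
        List.sum_replicate, smul_eq_mul]
      rw [ih (p % q) (Nat.mod_lt _ (Nat.pos_of_ne_zero hq0)) q
        (Nat.one_le_iff_ne_zero.mpr hr) (le_of_lt (Nat.mod_lt _ (Nat.pos_of_ne_zero hq0)))]
      have := Nat.div_add_mod p q
      nlinarith [Nat.div_add_mod p q]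
end

section
/- For all positive integers p ≥ q ≥ 1, the sum of the entries of the label sequence W(p,q) equals p + q − gcd(p,q). In particular, for a = p/q ≥ 1 in lowest terms, the weight expansion w(a) = (1/q)·W(p,q) satisfies Σ_i w_i = a + 1 − 1/q. -/
/-- for all positive integers `p ≥ q ≥ 1`, the sum of the entries of the label
sequence `W(p,q)` equals `p + q − gcd(p,q)` (in particular, for `a = p/q` in lowest terms the
weight expansion `w(a) = (1/q)·W(p,q)` satisfies `Σ wᵢ = a + 1 − 1/q`). -/
theorem weight_expansion_sum (p q : ℕ) (hq : 1 ≤ q) (hqp : q ≤ p) :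
    (W p q).sum = p + q - Nat.gcd p q := by
  induction q using Nat.strong_induction_on generalizing p with
  | _ q ih =>
    rw [W, dif_neg (by omega : q ≠ 0)]
    have hdm : p / q * q + p % q = p := by rw [Nat.mul_comm]; exact Nat.div_add_mod p q
    by_cases h : p % q = 0
    · rw [if_pos h]
      have hd : q ∣ p := Nat.dvd_of_mod_eq_zero h
      have hg : Nat.gcd p q = q := Nat.gcd_eq_right hd
      simp only [List.sum_replicate, smul_eq_mul]
      omega
    · rw [if_neg h]
      have hlt : p % q < q := Nat.mod_lt _ (by omega)
      have hih := ih (p % q) hlt q (by omega) (le_of_lt hlt)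
      have hg : Nat.gcd q (p % q) = Nat.gcd p q := by
        rw [Nat.gcd_comm p q, Nat.gcd_rec q p, Nat.gcd_comm]
      have hg2 : Nat.gcd q (p % q) ≤ p % q := Nat.gcd_le_right _ (by omega)
      simp only [List.sum_append, List.sum_replicate, smul_eq_mul, hih]
      omega
end

section
/- Let a = p/q > 1 be rational, let A, B be nonnegative integers not both zero, let k ≥ 1 be the number of lattice points on the slant edge of T^a_{A,B} (the segment where x + a·y = A + a·B, x ≥ 0, y ≥ 0), and let (A₀,B₀) be the lattice point on the slant edge with smallest x-coordinate. Then there exists ε > 0 such that for every irrational z with a − ε < z < a, #(T^z_{A₀,B₀} ∩ ℤ²) = #(T^a_{A,B} ∩ ℤ²) − (k − 1). -/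
set_option maxHeartbeats 1000000 in
/-- for rational `a = p/q > 1` and `(A,B) ≠ (0,0)`, if `k ≥ 1` is the number of
lattice points on the slant edge of `T^a_{A,B}` and `(A₀,B₀)` is the lattice point on the
slant edge of smallest `x`-coordinate, then there is `ε > 0` such that for every irrational
`z ∈ (a−ε, a)` one has `#(T^z_{A₀,B₀} ∩ ℤ²) = #(T^a_{A,B} ∩ ℤ²) − (k−1)`. -/
theorem lattice_count_left_perturbation (p q A B : ℕ) (hq : 0 < q) (hpq : q < p)
    (hAB : ¬ (A = 0 ∧ B = 0))
    (k : ℕ) (hk1 : 1 ≤ k) (hk : k = slantCount ((p : ℝ)/q) A B)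
    (A₀ B₀ : ℕ)
    (h₀ : (A₀ : ℝ) + ((p : ℝ)/q) * B₀ = (A : ℝ) + ((p : ℝ)/q) * B)
    (h₀min : ∀ x y : ℕ, (x : ℝ) + ((p : ℝ)/q) * y = (A : ℝ) + ((p : ℝ)/q) * B → A₀ ≤ x) :
    ∃ ε > (0 : ℝ), ∀ z : ℝ, Irrational z → (p : ℝ)/q - ε < z → z < (p : ℝ)/q →
      latticeCount z A₀ B₀ = latticeCount ((p : ℝ)/q) A B - (k - 1) := by
  set a : ℝ := (p : ℝ)/q with ha_def
  have hq0 : (0:ℝ) < q := by exact_mod_cast hq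
  have ha1 : 1 < a := by
    rw [ha_def, lt_div_iff₀ hq0]
    have : (q:ℝ) < (p:ℝ) := by exact_mod_cast hpq
    linarith
  set N : ℝ := (A : ℝ) + a * B with hN_def
  have hN0 : 0 ≤ N := by positivity
  -- rationality gap lemmas
  have hrw : ∀ x y : ℤ, (x:ℝ) + a * y = ((q*x + p*y : ℤ) : ℝ) / q := by
    intro x y
    rw [ha_def]
    push_cast
    field_simp
  have hrwN : N = ((q*A + p*B : ℕ) : ℝ) / q := by
    rw [hN_def, ha_def]
    push_cast
    field_simp
  have hgap_lt : ∀ x y : ℤ, (x:ℝ) + a * y < N → (x:ℝ) + a * y ≤ N - 1/q := by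
    intro x y h
    rw [hrw x y, hrwN] at h ⊢
    rw [div_lt_div_iff₀ hq0 hq0] at h
    have h2 : (q*x + p*y : ℤ) < ((q*A + p*B : ℕ) : ℤ) := by
      have := (mul_lt_mul_iff_of_pos_right hq0).mp h
      exact_mod_cast this
    have h3 : (q*x + p*y : ℤ) ≤ ((q*A + p*B : ℕ) : ℤ) - 1 := by omega
    have h4 : ((q*x + p*y : ℤ) : ℝ) ≤ ((q*A + p*B : ℕ) : ℝ) - 1 := by exact_mod_cast h3
    rw [div_le_iff₀ hq0, sub_mul, div_mul_cancel₀ _ (ne_of_gt hq0), div_mul_cancel₀ _ (ne_of_gt hq0)]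
    linarith
  have hgap_gt : ∀ x y : ℤ, N < (x:ℝ) + a * y → N + 1/q ≤ (x:ℝ) + a * y := by
    intro x y h
    rw [hrw x y, hrwN] at h ⊢
    rw [div_lt_div_iff₀ hq0 hq0] at h
    have h2 : ((q*A + p*B : ℕ) : ℤ) < (q*x + p*y : ℤ) := by
      have := (mul_lt_mul_iff_of_pos_right hq0).mp h
      exact_mod_cast this
    have h3 : ((q*A + p*B : ℕ) : ℤ) + 1 ≤ (q*x + p*y : ℤ) := by omega
    have h4 : ((q*A + p*B : ℕ) : ℝ) + 1 ≤ ((q*x + p*y : ℤ) : ℝ) := by exact_mod_cast h3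
    rw [le_div_iff₀ hq0, add_mul, div_mul_cancel₀ _ (ne_of_gt hq0), div_mul_cancel₀ _ (ne_of_gt hq0)]
    linarith
  -- the sets
  set Sa : Set (ℤ × ℤ) :=
    {xy : ℤ × ℤ | 0 ≤ xy.1 ∧ 0 ≤ xy.2 ∧ (xy.1 : ℝ) + a * xy.2 ≤ (A : ℝ) + a * B} with hSa_def
  set E : Set (ℤ × ℤ) :=
    {xy : ℤ × ℤ | 0 ≤ xy.1 ∧ 0 ≤ xy.2 ∧ (xy.1 : ℝ) + a * xy.2 = (A : ℝ) + a * B} with hE_def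
  set c : ℤ × ℤ := ((A₀ : ℤ), (B₀ : ℤ)) with hc_def
  have hc_mem : c ∈ E := by
    refine ⟨Int.ofNat_nonneg A₀, Int.ofNat_nonneg B₀, ?_⟩
    push_cast
    exact h₀
  have hE_sub : E ⊆ Sa := fun xy hxy => ⟨hxy.1, hxy.2.1, le_of_eq hxy.2.2⟩
  -- finiteness
  have hSa_fin : Sa.Finite := by
    apply Set.Finite.subset (Set.finite_Icc ((0:ℤ),(0:ℤ)) (⌈N⌉, ⌈N⌉))
    rintro ⟨x, y⟩ ⟨hx, hy, hle⟩
    have hy' : (0:ℝ) ≤ (y:ℝ) := by exact_mod_cast hy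
    have hx' : (0:ℝ) ≤ (x:ℝ) := by exact_mod_cast hx
    have hxN : (x:ℝ) ≤ N := by nlinarith
    have hyN : (y:ℝ) ≤ N := by nlinarith
    have h1 : x ≤ ⌈N⌉ := by
      have : (x:ℝ) ≤ (⌈N⌉:ℝ) := le_trans hxN (Int.le_ceil N)
      exact_mod_cast this
    have h2 : y ≤ ⌈N⌉ := by
      have : (y:ℝ) ≤ (⌈N⌉:ℝ) := le_trans hyN (Int.le_ceil N)
      exact_mod_cast this
    exact ⟨⟨hx, hy⟩, ⟨h1, h2⟩⟩
  have hE_fin : E.Finite := hSa_fin.subset hE_sub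
  have hk' : k = E.ncard := hk
  -- x-minimality in integer form
  have hA₀min : ∀ x y : ℤ, 0 ≤ x → 0 ≤ y → (x:ℝ) + a * y = N → (A₀ : ℤ) ≤ x := by
    intro x y hx hy hxy
    have e1 : ((x.toNat : ℕ) : ℝ) = (x : ℝ) := by exact_mod_cast Int.toNat_of_nonneg hx
    have e2 : ((y.toNat : ℕ) : ℝ) = (y : ℝ) := by exact_mod_cast Int.toNat_of_nonneg hy
    have := h₀min x.toNat y.toNat (by rw [e1, e2]; exact hxy)
    omega
  -- choose ε
  refine ⟨min (a - 1) (1 / (q * (N + 1))), lt_min (by linarith) (by positivity), ?_⟩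
  intro z _ hz1 hz2
  have hε1 : a - min (a - 1) (1 / (q * (N + 1))) ≥ 1 := by
    have := min_le_left (a - 1) (1 / (q * (N + 1)))
    linarith
  have hz_gt1 : 1 < z := lt_of_le_of_lt hε1 hz1
  have hzgap : a - z < 1 / (q * (N + 1)) := by
    have := min_le_right (a - 1) (1 / (q * (N + 1)))
    linarith
  have hεq : (1 / (q * (N + 1))) * (N + 1) ≤ 1 / q := by
    have hN1 : N + 1 ≠ 0 := by positivity
    have : (1 / (q * (N + 1))) * (N + 1) = 1 / q := by field_simp
    rw [this]
  set Sz : Set (ℤ × ℤ) :=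
    {xy : ℤ × ℤ | 0 ≤ xy.1 ∧ 0 ≤ xy.2 ∧ (xy.1 : ℝ) + z * xy.2 ≤ (A₀ : ℝ) + z * B₀} with hSz_def
  have hNc : (A₀ : ℝ) + a * B₀ = N := h₀
  have hB₀N : (B₀ : ℝ) ≤ N := by nlinarith [Nat.cast_nonneg (α := ℝ) B₀, Nat.cast_nonneg (α := ℝ) A₀]
  have hvertex_le : (A₀ : ℝ) + z * B₀ ≤ N := by nlinarith [Nat.cast_nonneg (α := ℝ) B₀]
  -- any edge point inside the z-triangle must be c
  have hEc : ∀ xy : ℤ × ℤ, xy ∈ E → (xy.1 : ℝ) + z * xy.2 ≤ (A₀ : ℝ) + z * B₀ → xy = c := by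
    rintro ⟨x, y⟩ ⟨hx, hy, hedge⟩ hzle
    have hxA₀ : (A₀ : ℤ) ≤ x := hA₀min x y hx hy hedge
    have hxA₀' : (A₀ : ℝ) ≤ (x:ℝ) := by exact_mod_cast hxA₀
    have hyB₀ : (y:ℝ) ≤ (B₀:ℝ) := by nlinarith
    have hyB₀' : (B₀:ℝ) ≤ (y:ℝ) := by nlinarith
    have hy_eq : (y:ℝ) = (B₀:ℝ) := le_antisymm hyB₀ hyB₀'
    have hx_eq : (x:ℝ) = (A₀:ℝ) := by
      rw [hy_eq] at hedge
      linarith [hedge, hNc]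
    have : x = (A₀:ℤ) := by exact_mod_cast hx_eq
    have : y = (B₀:ℤ) := by exact_mod_cast hy_eq
    simp_all [hc_def]
  -- the key set identity
  have hset : Sz = Sa \ (E \ {c}) := by
    ext ⟨x, y⟩
    constructor
    · rintro ⟨hx, hy, hzle⟩
      have hy' : (0:ℝ) ≤ (y:ℝ) := by exact_mod_cast hy
      have hx' : (0:ℝ) ≤ (x:ℝ) := by exact_mod_cast hx
      have hyN : (y:ℝ) ≤ N := by nlinarith
      have hmem : (x:ℝ) + a * y ≤ N := by
        by_contra hcon
        push_neg at hcon
        have h1 : N + 1/q ≤ (x:ℝ) + a * y := hgap_gt x y hcon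
        have h2 : (a - z) * y < (1 / (q * (N + 1))) * (N + 1) := by
          rcases eq_or_lt_of_le hy' with h | h
          · rw [← h]; simp; positivity
          · calc (a - z) * y ≤ (a-z) * (N+1) := by nlinarith
              _ < (1 / (q * (N + 1))) * (N + 1) := by
                  apply mul_lt_mul_of_pos_right hzgap; linarith
        have : (x:ℝ) + z * y > N := by nlinarith
        linarith
      refine ⟨⟨hx, hy, hmem⟩, ?_⟩
      rintro ⟨hEmem, hne⟩
      exact hne (hEc _ hEmem hzle)
    · rintro ⟨⟨hx, hy, hle⟩, hnot⟩
      have hy' : (0:ℝ) ≤ (y:ℝ) := by exact_mod_cast hy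
      refine ⟨hx, hy, ?_⟩
      rcases eq_or_lt_of_le hle with hEq | hlt
      · have hEmem : (x, y) ∈ E := ⟨hx, hy, hEq⟩
        have : (x, y) = c := by
          by_contra hne
          exact hnot ⟨hEmem, hne⟩
        rw [hc_def] at this
        obtain ⟨h1, h2⟩ := Prod.mk.injEq .. ▸ this
        simp only [Prod.mk.injEq] at this
        rw [this.1, this.2]
        push_cast
        linarith
      · have h1 : (x:ℝ) + a * y ≤ N - 1/q := hgap_lt x y hlt
        have h2 : (a - z) * B₀ ≤ (1 / (q * (N + 1))) * (N + 1) := by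
          rcases eq_or_lt_of_le (Nat.cast_nonneg (α := ℝ) B₀) with h | h
          · rw [← h]; simp; positivity
          · nlinarith
        have h3 : (a - z) * B₀ ≤ 1/q := le_trans h2 hεq
        have : (x:ℝ) + z * y ≤ (x:ℝ) + a * y := by nlinarith
        have hA₀z : N - 1/q ≤ (A₀:ℝ) + z * B₀ := by nlinarith
        linarith
  -- conclude by counting
  have hcount_z : latticeCount z A₀ B₀ = Sz.ncard := rfl
  have hcount_a : latticeCount a A B = Sa.ncard := rfl
  have hEc_sub : E \ {c} ⊆ Sa := (Set.diff_subset).trans hE_sub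
  rw [hcount_z, hcount_a, hset, Set.ncard_diff hEc_sub (hSa_fin.subset hEc_sub),
    Set.ncard_diff_singleton_of_mem hc_mem, ← hk']
end

section
/- Let a > 1 be irrational. Then the set {k_{A,B}(a) : A, B nonnegative integers, (A,B) ≠ (0,0)} is bounded above, and its supremum equals the infimum of the set of real numbers μ > 0 such that N(a,1) ≼ N(μ,μ), i.e. such that for every real t ≥ 0, #{(m,n) ∈ ℤ≥0 × ℤ≥0 : (m,n) ≠ (0,0), (m + n)·μ ≤ t} ≤ #{(m,n) ∈ ℤ≥0 × ℤ≥0 : (m,n) ≠ (0,0), m·a + n ≤ t}. -/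

/- ### Auxiliary machinery ### -/


def Lset (a t : ℝ) : Set (ℤ × ℤ) :=
  {xy : ℤ × ℤ | 0 ≤ xy.1 ∧ 0 ≤ xy.2 ∧ (xy.1 : ℝ) + a * xy.2 ≤ t}

noncomputable def Lcnt (a t : ℝ) : ℕ := (Lset a t).ncard

lemma Lset_finite {a : ℝ} (h1 : 1 < a) (t : ℝ) : (Lset a t).Finite := by
  have h0 : (0:ℝ) < a := by linarith
  apply Set.Finite.subset ((Set.finite_Icc (0:ℤ) ⌈t⌉).prod (Set.finite_Icc (0:ℤ) ⌈t⌉))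
  rintro ⟨x, y⟩ ⟨hx, hy, hxy⟩
  have hxr : (0:ℝ) ≤ x := by exact_mod_cast hx
  have hyr : (0:ℝ) ≤ y := by exact_mod_cast hy
  have hay : (0:ℝ) ≤ a * y := by positivity
  have hx2 : (x:ℝ) ≤ t := by linarith
  have hy2 : (y:ℝ) ≤ t := by nlinarith
  constructor
  · exact ⟨hx, by exact_mod_cast hx2.trans (Int.le_ceil t)⟩
  · exact ⟨hy, by exact_mod_cast hy2.trans (Int.le_ceil t)⟩

lemma Lset_mono {a : ℝ} {s t : ℝ} (h : s ≤ t) : Lset a s ⊆ Lset a t := by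
  rintro ⟨x, y⟩ ⟨hx, hy, hxy⟩; exact ⟨hx, hy, hxy.trans h⟩

lemma Lcnt_mono {a : ℝ} (h1 : 1 < a) {s t : ℝ} (h : s ≤ t) : Lcnt a s ≤ Lcnt a t :=
  Set.ncard_le_ncard (Lset_mono h) (Lset_finite h1 t)

lemma zero_mem_Lset {a t : ℝ} (ht : 0 ≤ t) : ((0:ℤ), (0:ℤ)) ∈ Lset a t := by
  refine ⟨le_refl _, le_refl _, by simpa using ht⟩

lemma one_le_Lcnt {a : ℝ} (h1 : 1 < a) {t : ℝ} (ht : 0 ≤ t) : 1 ≤ Lcnt a t := by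
  exact (Set.ncard_pos (Lset_finite h1 t)).2 ⟨_, zero_mem_Lset (a := a) ht⟩

lemma val_pos {a : ℝ} (h1 : 1 < a) {A B : ℕ} (h : ¬(A = 0 ∧ B = 0)) :
    0 < (A:ℝ) + a * B := by
  rcases Nat.eq_zero_or_pos A with hA | hA
  · have hB : 1 ≤ B := by omega
    have : (1:ℝ) ≤ (B:ℝ) := by exact_mod_cast hB
    nlinarith
  · have : (1:ℝ) ≤ (A:ℝ) := by exact_mod_cast hA
    have : (0:ℝ) ≤ a * B := by positivity
    linarith

lemma uniq_pt {a : ℝ} (ha : Irrational a) {A B : ℕ} {x y : ℤ}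
    (h : (x:ℝ) + a * y = (A:ℝ) + a * B) : x = (A:ℤ) ∧ y = (B:ℤ) := by
  by_cases hy : y = (B:ℤ)
  · refine ⟨?_, hy⟩
    have : (x:ℝ) = (A:ℝ) := by
      rw [hy] at h; push_cast at h ⊢; linarith
    exact_mod_cast this
  · exfalso
    have hne : ((B:ℤ) - y : ℝ) ≠ 0 := by
      intro hc
      apply hy
      have : ((B:ℤ):ℝ) - (y:ℝ) = 0 := by push_cast at hc ⊢; linarith
      have : (y:ℝ) = ((B:ℤ):ℝ) := by push_cast at this ⊢; linarith
      exact_mod_cast this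
    have : a = ((x - (A:ℤ) : ℤ) : ℝ) / (((B:ℤ) - y : ℤ) : ℝ) := by
      push_cast at hne ⊢
      field_simp
      push_cast at h
      nlinarith [h]
    rw [this] at ha
    exact (Rat.not_irrational _) (by
      have : ((((x - (A:ℤ) : ℤ) : ℚ) / (((B:ℤ) - y : ℤ) : ℚ) : ℚ) : ℝ)
          = ((x - (A:ℤ) : ℤ) : ℝ) / (((B:ℤ) - y : ℤ) : ℝ) := by push_cast; ring
      rwa [← this] at ha)

def triF (d : ℕ) : Finset (ℕ × ℕ) := (Finset.range (d+1)).biUnion Finset.HasAntidiagonal.antidiagonal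

lemma mem_triF {d : ℕ} {mn : ℕ × ℕ} : mn ∈ triF d ↔ mn.1 + mn.2 ≤ d := by
  simp only [triF, Finset.mem_biUnion, Finset.mem_range, Finset.HasAntidiagonal.mem_antidiagonal]
  constructor
  · rintro ⟨k, hk, rfl⟩; omega
  · intro h; exact ⟨mn.1 + mn.2, by omega, rfl⟩

lemma triF_card (d : ℕ) : 2 * (triF d).card = (d+1)*(d+2) := by
  induction d with
  | zero => decide
  | succ d ih =>
    have : triF (d+1) = Finset.HasAntidiagonal.antidiagonal (d+1) ∪ triF d := by
      rw [triF, Finset.range_add_one, Finset.biUnion_insert]; rfl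
    rw [this, Finset.card_union_of_disjoint]
    · rw [Finset.Nat.card_antidiagonal]
      nlinarith [ih]
    · rw [Finset.disjoint_left]
      intro mn h1 h2
      rw [Finset.HasAntidiagonal.mem_antidiagonal] at h1
      have := mem_triF.1 h2
      omega

lemma tri_set_eq (d : ℕ) :
    {mn : ℕ × ℕ | mn ≠ (0,0) ∧ mn.1 + mn.2 ≤ d} = ↑(triF d \ {(0,0)}) := by
  ext mn
  simp [mem_triF, and_comm]

lemma tri_nonzero_card (d : ℕ) :
    2 * (Set.ncard {mn : ℕ × ℕ | mn ≠ (0,0) ∧ mn.1 + mn.2 ≤ d} + 1) = (d+1)*(d+2) := by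
  rw [tri_set_eq, Set.ncard_coe_finset]
  have h0 : ((0,0) : ℕ × ℕ) ∈ triF d := mem_triF.2 (by simp)
  have hd : (triF d \ {(0,0)}).card = (triF d).card - 1 := by
    rw [Finset.card_sdiff_of_subset (Finset.singleton_subset_iff.2 h0)]
    simp
  have hc := triF_card d
  have hpos : 1 ≤ (triF d).card := Finset.card_pos.2 ⟨_, h0⟩
  omega

lemma tri_nonzero_finite (d : ℕ) :
    ({mn : ℕ × ℕ | mn ≠ (0,0) ∧ mn.1 + mn.2 ≤ d}).Finite := by
  rw [tri_set_eq]; exact (triF d \ {(0,0)}).finite_toSet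

/-- Relation between `Lcnt` and the ℕ×ℕ count in the theorem statement. -/
lemma Lcnt_cast {a t : ℝ} (h1 : 1 < a) (ht : 0 ≤ t) :
    Set.ncard {mn : ℕ × ℕ | mn ≠ (0, 0) ∧ (mn.1 : ℝ) * a + (mn.2 : ℝ) ≤ t} + 1 = Lcnt a t := by
  have hinj : Function.Injective (fun mn : ℕ × ℕ => ((mn.2 : ℤ), (mn.1 : ℤ))) := by
    rintro ⟨m, n⟩ ⟨m', n'⟩ h
    simp only [Prod.mk.injEq] at h ⊢
    constructor
    · exact_mod_cast h.2
    · exact_mod_cast h.1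
  have hset : Lset a t = insert ((0:ℤ),(0:ℤ))
      ((fun mn : ℕ × ℕ => ((mn.2 : ℤ), (mn.1 : ℤ))) ''
        {mn : ℕ × ℕ | mn ≠ (0, 0) ∧ (mn.1 : ℝ) * a + (mn.2 : ℝ) ≤ t}) := by
    ext ⟨x, y⟩
    simp only [Lset, Set.mem_setOf_eq, Set.mem_insert_iff, Set.mem_image, Prod.mk.injEq,
      Prod.ext_iff]
    constructor
    · rintro ⟨hx, hy, hxy⟩
      by_cases h0 : x = 0 ∧ y = 0
      · exact Or.inl ⟨h0.1, h0.2⟩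
      · refine Or.inr ⟨(y.toNat, x.toNat), ⟨?_, ?_⟩, ?_, ?_⟩
        · rintro hc
          simp only [Prod.mk.injEq] at hc
          exact h0 ⟨by omega, by omega⟩
        · have ex : ((x.toNat:ℕ):ℝ) = ((x:ℤ):ℝ) := by norm_cast; rw [Int.toNat_of_nonneg hx]
          have ey : ((y.toNat:ℕ):ℝ) = ((y:ℤ):ℝ) := by norm_cast; rw [Int.toNat_of_nonneg hy]
          simp only [ex, ey]
          linarith
        · simp [Int.toNat_of_nonneg hx]
        · simp [Int.toNat_of_nonneg hy]
    · rintro (⟨rfl, rfl⟩ | ⟨⟨m, n⟩, ⟨hmn0, hmn⟩, h2, h3⟩)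
      · exact ⟨le_refl _, le_refl _, by simpa using ht⟩
      · subst h2; subst h3
        refine ⟨Int.natCast_nonneg _, Int.natCast_nonneg _, ?_⟩
        push_cast
        push_cast at hmn
        linarith
  have hfin : ((fun mn : ℕ × ℕ => ((mn.2 : ℤ), (mn.1 : ℤ))) ''
      {mn : ℕ × ℕ | mn ≠ (0, 0) ∧ (mn.1 : ℝ) * a + (mn.2 : ℝ) ≤ t}).Finite := by
    have := Lset_finite h1 t
    rw [hset] at this
    exact Set.Finite.subset this (Set.subset_insert _ _)
  have hnm : ((0:ℤ),(0:ℤ)) ∉ (fun mn : ℕ × ℕ => ((mn.2 : ℤ), (mn.1 : ℤ))) ''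
      {mn : ℕ × ℕ | mn ≠ (0, 0) ∧ (mn.1 : ℝ) * a + (mn.2 : ℝ) ≤ t} := by
    rintro ⟨⟨m, n⟩, ⟨hmn0, _⟩, hc⟩
    simp only [Prod.mk.injEq] at hc
    exact hmn0 (by simp only [Prod.mk.injEq]; constructor <;> omega)
  rw [Lcnt, hset, Set.ncard_insert_of_notMem hnm hfin,
    Set.ncard_image_of_injective _ hinj]

/-- If `u` is strictly below the value `A + aB`, then the count strictly increases. -/
lemma Lcnt_lt {a : ℝ} (h1 : 1 < a) {u : ℝ} (A B : ℕ) (h : u < (A:ℝ) + a * B) :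
    Lcnt a u + 1 ≤ Lcnt a ((A:ℝ) + a * B) := by
  set pt : ℤ × ℤ := ((A:ℤ), (B:ℤ)) with hpt
  have hnm : pt ∉ Lset a u := by
    rintro ⟨-, -, hc⟩
    simp only [hpt] at hc
    push_cast at hc
    linarith
  have hsub : insert pt (Lset a u) ⊆ Lset a ((A:ℝ) + a * B) := by
    rintro p (rfl | hp)
    · exact ⟨Int.natCast_nonneg _, Int.natCast_nonneg _, by push_cast; exact le_refl _⟩
    · exact Lset_mono (le_of_lt h) hp
  have h2 := Set.ncard_le_ncard hsub (Lset_finite h1 _)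
  rwa [Set.ncard_insert_of_notMem hnm (Lset_finite h1 u)] at h2

/-- There is a maximal value `A + aB ≤ t` capturing all the lattice points. -/
lemma exists_max_value {a : ℝ} (h1 : 1 < a) {t : ℝ} (ht : 0 ≤ t) (h2 : 2 ≤ Lcnt a t) :
    ∃ A B : ℕ, ¬(A = 0 ∧ B = 0) ∧ (A:ℝ) + a * B ≤ t ∧ Lcnt a t ≤ Lcnt a ((A:ℝ) + a * B) := by
  have hfin := Lset_finite h1 t
  have hne : (Lset a t).Nonempty := ⟨_, zero_mem_Lset ht⟩
  obtain ⟨q, hq, hmax⟩ := Set.exists_max_image (Lset a t) (fun p => (p.1:ℝ) + a * p.2) hfin hne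
  obtain ⟨hq1, hq2, hq3⟩ := hq
  -- a nonzero element exists
  obtain ⟨p, p', hp, hp', hpp'⟩ := (Set.one_lt_ncard_iff hfin).1 (lt_of_lt_of_le one_lt_two h2)
  have hexnz : ∃ r ∈ Lset a t, r ≠ ((0:ℤ),(0:ℤ)) := by
    by_cases h : p = ((0:ℤ),(0:ℤ))
    · refine ⟨p', hp', fun hc => hpp' ?_⟩
      rw [h, hc]
    · exact ⟨p, hp, h⟩
  obtain ⟨r, hr, hr0⟩ := hexnz
  have hrpos : 0 < (r.1:ℝ) + a * r.2 := by
    obtain ⟨hr1, hr2, -⟩ := hr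
    rcases eq_or_lt_of_le hr1 with h | h
    · have hr2' : 0 < r.2 := by
        rcases eq_or_lt_of_le hr2 with h' | h'
        · exfalso; apply hr0; ext <;> omega
        · exact h'
      have e1 : (1:ℝ) ≤ (r.2:ℝ) := by exact_mod_cast hr2'
      have e2 : (r.1:ℝ) = 0 := by exact_mod_cast h.symm
      nlinarith
    · have : (1:ℝ) ≤ (r.1:ℝ) := by exact_mod_cast h
      have : (0:ℝ) ≤ a * r.2 := by positivity
      nlinarith
  have hqpos : 0 < (q.1:ℝ) + a * q.2 := lt_of_lt_of_le hrpos (hmax r hr)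
  refine ⟨q.1.toNat, q.2.toNat, ?_, ?_, ?_⟩
  · rintro ⟨hA, hB⟩
    have : q.1 = 0 := by omega
    have : q.2 = 0 := by omega
    simp_all
  · have e1 : ((q.1.toNat:ℕ):ℝ) = ((q.1:ℤ):ℝ) := by norm_cast; rw [Int.toNat_of_nonneg hq1]
    have e2 : ((q.2.toNat:ℕ):ℝ) = ((q.2:ℤ):ℝ) := by norm_cast; rw [Int.toNat_of_nonneg hq2]
    rw [e1, e2]; exact hq3
  · have e1 : ((q.1.toNat:ℕ):ℝ) = ((q.1:ℤ):ℝ) := by norm_cast; rw [Int.toNat_of_nonneg hq1]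
    have e2 : ((q.2.toNat:ℕ):ℝ) = ((q.2:ℤ):ℝ) := by norm_cast; rw [Int.toNat_of_nonneg hq2]
    rw [e1, e2]
    apply Set.ncard_le_ncard _ (Lset_finite h1 _)
    rintro p hp
    obtain ⟨h1', h2', h3'⟩ := hp
    exact ⟨h1', h2', hmax p ⟨h1', h2', h3'⟩⟩

/-- Grid lower bound: `Lcnt a (d + a d) ≥ (d+1)^2`. -/
lemma grid_bound {a : ℝ} (h1 : 1 < a) (d : ℕ) :
    (d+1)*(d+1) ≤ Lcnt a ((d:ℝ) + a * d) := by
  have hsub : ↑((Finset.Icc (0:ℤ) d) ×ˢ (Finset.Icc (0:ℤ) d)) ⊆ Lset a ((d:ℝ) + a * d) := by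
    rintro ⟨x, y⟩ hxy
    simp only [Finset.coe_product, Set.mem_prod, Finset.mem_coe, Finset.mem_Icc] at hxy
    obtain ⟨⟨hx0, hxd⟩, ⟨hy0, hyd⟩⟩ := hxy
    refine ⟨hx0, hy0, ?_⟩
    have h1' : (x:ℝ) ≤ d := by exact_mod_cast hxd
    have h2' : (y:ℝ) ≤ d := by exact_mod_cast hyd
    have h3' : a * y ≤ a * d := by
      apply mul_le_mul_of_nonneg_left h2' (by linarith)
    linarith
  have := Set.ncard_le_ncard hsub (Lset_finite h1 _)
  rw [Set.ncard_coe_finset, Finset.card_product, Int.card_Icc] at this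
  simpa [Lcnt] using this

lemma exists_tau {a : ℝ} (h1 : 1 < a) (ha : Irrational a) {d : ℕ} (hd : 1 ≤ d) :
    ∃ A B : ℕ, ¬(A = 0 ∧ B = 0) ∧ 2 * Lcnt a ((A:ℝ) + a * B) = (d+1)*(d+2) ∧
    ∀ A' B' : ℕ, ¬(A' = 0 ∧ B' = 0) → (d+1)*(d+2) ≤ 2 * Lcnt a ((A':ℝ) + a * B') →
      (A:ℝ) + a * B ≤ (A':ℝ) + a * B' := by
  have ha0 : (0:ℝ) < a := by linarith
  set t0 : ℝ := (d:ℝ) + a * d with ht0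
  have ht0pos : 0 < t0 := val_pos h1 (by omega)
  -- the grid bound at t0
  have hgrid : (d+1)*(d+2) ≤ 2 * Lcnt a t0 := by
    have := grid_bound h1 d
    nlinarith [this]
  -- the candidate set
  set W : Set ℝ := {v | ∃ A B : ℕ, ¬(A = 0 ∧ B = 0) ∧ v = (A:ℝ) + a * B ∧ v ≤ t0 ∧
    (d+1)*(d+2) ≤ 2 * Lcnt a v} with hW
  have hWne : W.Nonempty := ⟨t0, d, d, by omega, rfl, le_refl _, hgrid⟩
  have hWfin : W.Finite := by
    set n0 : ℕ := ⌈t0⌉₊ with hn0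
    apply Set.Finite.subset (Set.Finite.image (fun AB : ℕ × ℕ => (AB.1:ℝ) + a * AB.2)
      ((Finset.range (n0+1) ×ˢ Finset.range (n0+1)).finite_toSet))
    rintro v ⟨A, B, hAB, rfl, hvle, -⟩
    refine ⟨(A, B), ?_, rfl⟩
    simp only [Finset.coe_product, Set.mem_prod, Finset.mem_coe, Finset.mem_range]
    have hBa : (B:ℝ) ≤ a * B := by nlinarith [Nat.cast_nonneg (α := ℝ) B]
    have haB : (0:ℝ) ≤ a * B := by positivity
    have hA : (A:ℝ) ≤ t0 := by linarith
    have hB : (B:ℝ) ≤ t0 := by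
      have : (0:ℝ) ≤ (A:ℝ) := Nat.cast_nonneg A
      linarith
    constructor
    · have : (A:ℝ) ≤ (n0:ℝ) := hA.trans (Nat.le_ceil t0)
      have : A ≤ n0 := by exact_mod_cast this
      omega
    · have : (B:ℝ) ≤ (n0:ℝ) := hB.trans (Nat.le_ceil t0)
      have : B ≤ n0 := by exact_mod_cast this
      omega
  obtain ⟨v, hvW, hmin⟩ := Set.exists_min_image W id hWfin hWne
  obtain ⟨A, B, hAB, hv, hvle, hge⟩ := hvW
  -- global minimality
  have hglobal : ∀ A' B' : ℕ, ¬(A' = 0 ∧ B' = 0) →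
      (d+1)*(d+2) ≤ 2 * Lcnt a ((A':ℝ) + a * B') → v ≤ (A':ℝ) + a * B' := by
    intro A' B' hAB' hge'
    by_cases h : (A':ℝ) + a * B' ≤ t0
    · exact hmin _ ⟨A', B', hAB', rfl, h, hge'⟩
    · linarith
  -- exactness
  have hle : 2 * Lcnt a v ≤ (d+1)*(d+2) := by
    by_contra hgt
    push_neg at hgt
    have h6 : 6 ≤ (d+1)*(d+2) := by nlinarith
    set pt : ℤ × ℤ := ((A:ℤ), (B:ℤ)) with hpt
    have hptmem : pt ∈ Lset a v := by
      refine ⟨Int.natCast_nonneg _, Int.natCast_nonneg _, ?_⟩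
      rw [hv]; push_cast; exact le_refl _
    set P' : Set (ℤ × ℤ) := Lset a v \ {pt} with hP'
    have hP'fin : P'.Finite := (Lset_finite h1 v).subset Set.diff_subset
    have hP'card : P'.ncard = Lcnt a v - 1 :=
      Set.ncard_diff_singleton_of_mem hptmem
    have hLv4 : 4 ≤ Lcnt a v := by omega
    have hP'ne : P'.Nonempty := by
      rw [← Set.ncard_pos hP'fin]
      omega
    obtain ⟨q, hqP', hqmax⟩ := Set.exists_max_image P' (fun p => (p.1:ℝ) + a * p.2) hP'fin hP'ne
    obtain ⟨⟨hq1, hq2, hq3⟩, hqne⟩ := hqP'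
    set w : ℝ := (q.1:ℝ) + a * q.2 with hw
    have hw0 : 0 ≤ w := by
      have : (0:ℝ) ≤ (q.1:ℝ) := by exact_mod_cast hq1
      have : (0:ℝ) ≤ (q.2:ℝ) := by exact_mod_cast hq2
      positivity
    have hwlt : w < v := by
      rcases lt_or_eq_of_le hq3 with h | h
      · exact h
      · exfalso
        apply hqne
        rw [hv] at h
        obtain ⟨e1, e2⟩ := uniq_pt ha h
        simp only [Set.mem_singleton_iff, hpt]
        exact Prod.ext e1 e2
    have hsub : P' ⊆ Lset a w := by
      rintro p ⟨⟨hp1, hp2, hp3⟩, hpne⟩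
      exact ⟨hp1, hp2, hqmax p ⟨⟨hp1, hp2, hp3⟩, hpne⟩⟩
    have hLw : Lcnt a v - 1 ≤ Lcnt a w := by
      rw [← hP'card]
      exact Set.ncard_le_ncard hsub (Lset_finite h1 w)
    have heven : ∃ k, (d+1)*(d+2) = 2*k := by
      obtain ⟨k, hk⟩ := Nat.even_mul_succ_self (d+1)
      have hk' : (d+1)*(d+2) = k + k := by rw [← hk]
      exact ⟨k, by rw [hk']; ring⟩
    obtain ⟨k, hk⟩ := heven
    have hwge : (d+1)*(d+2) ≤ 2 * Lcnt a w := by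
      rw [hk] at hgt ⊢
      clear * - hgt hLw hLv4
      omega
    have h2w : 2 ≤ Lcnt a w := by
      clear * - hgt hLw hLv4
      omega
    obtain ⟨A'', B'', hAB'', hule, hLu⟩ := exists_max_value h1 hw0 h2w
    have : v ≤ (A'':ℝ) + a * B'' := by
      apply hmin
      exact ⟨A'', B'', hAB'', rfl, by linarith, by omega⟩
    linarith
  exact ⟨A, B, hAB, by rw [← hv]; omega, by rw [← hv]; exact hglobal⟩

lemma latticeCount_eq (a : ℝ) (A B : ℕ) : latticeCount a A B = Lcnt a ((A:ℝ) + a * B) := rfl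

lemma ddeg_spec {a : ℝ} (h1 : 1 < a) {A B : ℕ} (hAB : ¬(A = 0 ∧ B = 0)) :
    0 < ddeg a A B ∧
      2 * Lcnt a ((A:ℝ) + a * B) ≤ (ddeg a A B + 1) * (ddeg a A B + 2) := by
  have hpos := val_pos h1 hAB
  have hL1 : 1 ≤ Lcnt a ((A:ℝ) + a * B) := one_le_Lcnt h1 hpos.le
  have hmem : (2 * latticeCount a A B) ∈
      {d : ℕ | 0 < d ∧ 2 * latticeCount a A B ≤ (d+1)*(d+2)} := by
    constructor
    · rw [latticeCount_eq]; omega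
    · nlinarith [Nat.zero_le (2 * latticeCount a A B)]
  have := Nat.sInf_mem (Set.nonempty_of_mem hmem)
  exact ⟨this.1, by rw [← latticeCount_eq]; exact this.2⟩

lemma ddeg_min {a : ℝ} (A B : ℕ) {d : ℕ} (hd : 0 < d)
    (h : 2 * Lcnt a ((A:ℝ) + a * B) ≤ (d+1)*(d+2)) : ddeg a A B ≤ d :=
  Nat.sInf_le ⟨hd, by rw [latticeCount_eq]; exact h⟩

lemma grid_cond {a : ℝ} (h1 : 1 < a) {d : ℕ} (hd : 1 ≤ d) :
    (d+1)*(d+2) ≤ 2 * Lcnt a ((d:ℝ) + a * d) := by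
  have := grid_bound h1 d
  nlinarith [this]

lemma kab_le {a : ℝ} (h1 : 1 < a) (ha : Irrational a) {A B : ℕ} (hAB : ¬(A = 0 ∧ B = 0)) :
    kABval a A B ≤ a + 1 := by
  obtain ⟨hdpos, hdle⟩ := ddeg_spec h1 hAB
  set d : ℕ := ddeg a A B with hd
  have hd1 : 1 ≤ d := hdpos
  obtain ⟨A₀, B₀, hAB₀, heq, hminτ⟩ := exists_tau h1 ha hd1
  set v : ℝ := (A₀:ℝ) + a * B₀ with hv
  set t : ℝ := (A:ℝ) + a * B with ht
  have htv : t ≤ v := by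
    by_contra hc
    push_neg at hc
    have := Lcnt_lt h1 A B hc
    rw [← ht] at this
    linarith [heq, hdle, this]
  have hvd : v ≤ (d:ℝ) + a * d := hminτ d d (by omega) (grid_cond h1 hd1)
  have hdr : (0:ℝ) < (d:ℝ) := by exact_mod_cast hdpos
  rw [kABval, ← ht, ← hd]
  rw [div_le_iff₀ hdr]
  have : (d:ℝ) + a * d = (a+1) * d := by ring
  linarith

/-- for irrational `a > 1`, the set of values `k_{A,B}(a)` (over nonnegative
integers `(A,B) ≠ (0,0)`) is bounded above, and its supremum `c_ECH(a)` equals the infimum of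
the set of `μ > 0` such that `N(a,1) ≼ N(μ,μ)`, i.e. such that for every `t ≥ 0` the number of
pairs `(m,n) ≠ (0,0)` of nonnegative integers with `(m+n)·μ ≤ t` is at most the number with
`m·a + n ≤ t`. -/
theorem cECH_eq_sequence_comparison (a : ℝ) (ha : Irrational a) (h1 : 1 < a) :
    BddAbove {x : ℝ | ∃ A B : ℕ, ¬ (A = 0 ∧ B = 0) ∧ x = kABval a A B} ∧
    sSup {x : ℝ | ∃ A B : ℕ, ¬ (A = 0 ∧ B = 0) ∧ x = kABval a A B} =
      sInf {μ : ℝ | 0 < μ ∧ ∀ t : ℝ, 0 ≤ t →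
        Set.ncard {mn : ℕ × ℕ | mn ≠ (0, 0) ∧ ((mn.1 : ℝ) + (mn.2 : ℝ)) * μ ≤ t} ≤
        Set.ncard {mn : ℕ × ℕ | mn ≠ (0, 0) ∧ (mn.1 : ℝ) * a + (mn.2 : ℝ) ≤ t}} := by
  set K : Set ℝ := {x : ℝ | ∃ A B : ℕ, ¬ (A = 0 ∧ B = 0) ∧ x = kABval a A B} with hK
  have hbdd : BddAbove K := by
    refine ⟨a + 1, ?_⟩
    rintro x ⟨A, B, hAB, rfl⟩
    exact kab_le h1 ha hAB
  have hKne : K.Nonempty := ⟨kABval a 1 0, 1, 0, by simp, rfl⟩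
  set c : ℝ := sSup K with hc
  have hk10 : 0 < kABval a 1 0 := by
    have h10 : ¬((1:ℕ) = 0 ∧ (0:ℕ) = 0) := by simp
    obtain ⟨hdpos, -⟩ := ddeg_spec h1 h10
    have : (0:ℝ) < ((ddeg a 1 0 : ℕ) : ℝ) := by exact_mod_cast hdpos
    have hval : (0:ℝ) < ((1:ℕ):ℝ) + a * ((0:ℕ):ℝ) := val_pos h1 h10
    exact div_pos hval this
  have hcpos : 0 < c := lt_of_lt_of_le hk10 (le_csSup hbdd ⟨1, 0, by simp, rfl⟩)
  have hSect : {μ : ℝ | 0 < μ ∧ ∀ t : ℝ, 0 ≤ t →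
      Set.ncard {mn : ℕ × ℕ | mn ≠ (0, 0) ∧ ((mn.1 : ℝ) + (mn.2 : ℝ)) * μ ≤ t} ≤
      Set.ncard {mn : ℕ × ℕ | mn ≠ (0, 0) ∧ (mn.1 : ℝ) * a + (mn.2 : ℝ) ≤ t}}
      = Set.Ici c := by
    ext μ
    simp only [Set.mem_setOf_eq, Set.mem_Ici]
    constructor
    · rintro ⟨hμ, hcond⟩
      -- show c ≤ μ : μ is an upper bound of K
      apply csSup_le hKne
      rintro x ⟨A, B, hAB, rfl⟩
      obtain ⟨hdpos, hdle⟩ := ddeg_spec h1 hAB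
      set d : ℕ := ddeg a A B with hd
      set t : ℝ := (A:ℝ) + a * B with ht
      have hdμ : (0:ℝ) ≤ (d:ℝ) * μ := by positivity
      have hcd := hcond ((d:ℝ) * μ) hdμ
      -- LHS set is exactly the triangle
      have hLHS : {mn : ℕ × ℕ | mn ≠ (0, 0) ∧ ((mn.1 : ℝ) + (mn.2 : ℝ)) * μ ≤ (d:ℝ) * μ}
          = {mn : ℕ × ℕ | mn ≠ (0,0) ∧ mn.1 + mn.2 ≤ d} := by
        ext ⟨m, n⟩
        simp only [Set.mem_setOf_eq, and_congr_right_iff]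
        intro _
        rw [mul_le_mul_iff_left₀ hμ]
        constructor
        · intro h; exact_mod_cast h
        · intro h; exact_mod_cast h
      rw [hLHS] at hcd
      have htri := tri_nonzero_card d
      obtain ⟨hL1, hLc⟩ : 1 ≤ Lcnt a ((d:ℝ)*μ) ∧
          Set.ncard {mn : ℕ × ℕ | mn ≠ (0, 0) ∧ (mn.1 : ℝ) * a + (mn.2 : ℝ) ≤ (d:ℝ)*μ} + 1
            = Lcnt a ((d:ℝ)*μ) :=
        ⟨one_le_Lcnt h1 hdμ, Lcnt_cast h1 hdμ⟩
      have hLdμ : (d+1)*(d+2) ≤ 2 * Lcnt a ((d:ℝ)*μ) := by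
        have : Set.ncard {mn : ℕ × ℕ | mn ≠ (0,0) ∧ mn.1 + mn.2 ≤ d} + 1 ≤ Lcnt a ((d:ℝ)*μ) := by
          omega
        calc (d+1)*(d+2) = 2 * (Set.ncard {mn : ℕ × ℕ | mn ≠ (0,0) ∧ mn.1 + mn.2 ≤ d} + 1) :=
              htri.symm
          _ ≤ 2 * Lcnt a ((d:ℝ)*μ) := by omega
      have h6 : 6 ≤ (d+1)*(d+2) := by nlinarith [hdpos]
      have h2L : 2 ≤ Lcnt a ((d:ℝ)*μ) := by
        clear * - hLdμ h6
        omega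
      obtain ⟨A'', B'', hAB'', hule, hLu⟩ := exists_max_value h1 hdμ h2L
      have hLu2 : (d+1)*(d+2) ≤ 2 * Lcnt a ((A'':ℝ) + a * B'') := by
        clear * - hLdμ hLu
        omega
      have htu : t ≤ (A'':ℝ) + a * B'' := by
        by_contra hcon
        push_neg at hcon
        have := Lcnt_lt h1 A B hcon
        rw [← ht] at this
        linarith [hdle]
      have hdr : (0:ℝ) < (d:ℝ) := by exact_mod_cast hdpos
      rw [kABval, ← ht, ← hd, div_le_iff₀ hdr]
      calc t ≤ (A'':ℝ) + a * B'' := htu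
        _ ≤ (d:ℝ) * μ := hule
        _ = μ * d := by ring
    · intro hcμ
      have hμpos : 0 < μ := lt_of_lt_of_le hcpos hcμ
      refine ⟨hμpos, ?_⟩
      intro t ht
      rcases lt_or_ge t μ with htμ | htμ
      · -- LHS set empty
        have : {mn : ℕ × ℕ | mn ≠ (0, 0) ∧ ((mn.1 : ℝ) + (mn.2 : ℝ)) * μ ≤ t} = ∅ := by
          ext ⟨m, n⟩
          simp only [Set.mem_setOf_eq, Set.mem_empty_iff_false, iff_false, not_and]
          intro hmn
          have h1mn : 1 ≤ m + n := by
            by_contra hcon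
            push_neg at hcon
            have hm : m = 0 := by omega
            have hn : n = 0 := by omega
            subst hm; subst hn
            exact hmn rfl
          have : (1:ℝ) ≤ (m:ℝ) + (n:ℝ) := by exact_mod_cast h1mn
          intro hle
          nlinarith
        rw [this]
        simp
      · -- main case
        set d : ℕ := ⌊t/μ⌋₊ with hd
        have htμ' : (1:ℝ) ≤ t / μ := (one_le_div hμpos).2 htμ
        have hd1 : 1 ≤ d := Nat.le_floor (by exact_mod_cast htμ')
        have hdμt : (d:ℝ) * μ ≤ t := by
          have := Nat.floor_le (div_nonneg ht hμpos.le)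
          rw [← hd] at this
          calc (d:ℝ) * μ ≤ (t/μ) * μ := by nlinarith
            _ = t := by field_simp
        -- LHS ⊆ triangle
        have hsub : {mn : ℕ × ℕ | mn ≠ (0, 0) ∧ ((mn.1 : ℝ) + (mn.2 : ℝ)) * μ ≤ t}
            ⊆ {mn : ℕ × ℕ | mn ≠ (0,0) ∧ mn.1 + mn.2 ≤ d} := by
          rintro ⟨m, n⟩ ⟨hmn, hle⟩
          refine ⟨hmn, ?_⟩
          apply Nat.le_floor
          rw [le_div_iff₀ hμpos]
          push_cast
          push_cast at hle
          linarith
        have hLHS : Set.ncard {mn : ℕ × ℕ | mn ≠ (0, 0) ∧ ((mn.1 : ℝ) + (mn.2 : ℝ)) * μ ≤ t}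
            ≤ Set.ncard {mn : ℕ × ℕ | mn ≠ (0,0) ∧ mn.1 + mn.2 ≤ d} :=
          Set.ncard_le_ncard hsub (tri_nonzero_finite d)
        -- τ_d
        obtain ⟨A₀, B₀, hAB₀, heq, hminτ⟩ := exists_tau h1 ha hd1
        set v : ℝ := (A₀:ℝ) + a * B₀ with hv
        obtain ⟨hd₀pos, -⟩ := ddeg_spec h1 hAB₀
        have hd₀le : ddeg a A₀ B₀ ≤ d := ddeg_min A₀ B₀ hd1 (le_of_eq heq)
        set d₀ : ℕ := ddeg a A₀ B₀ with hd₀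
        have hkv : kABval a A₀ B₀ ≤ μ := by
          have : kABval a A₀ B₀ ∈ K := ⟨A₀, B₀, hAB₀, rfl⟩
          exact (le_csSup hbdd this).trans hcμ
        have hd₀r : (0:ℝ) < (d₀:ℝ) := by exact_mod_cast hd₀pos
        have hvle : v ≤ (d₀:ℝ) * μ := by
          rw [kABval, ← hv, ← hd₀, div_le_iff₀ hd₀r] at hkv
          linarith [hkv]
        have hvt : v ≤ t := by
          have : (d₀:ℝ) ≤ (d:ℝ) := by exact_mod_cast hd₀le
          have : (d₀:ℝ) * μ ≤ (d:ℝ) * μ := by nlinarith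
          linarith
        have hLt : (d+1)*(d+2) ≤ 2 * Lcnt a t := by
          have := Lcnt_mono h1 hvt
          calc (d+1)*(d+2) = 2 * Lcnt a v := heq.symm
            _ ≤ 2 * Lcnt a t := by omega
        have htri := tri_nonzero_card d
        have hRc := Lcnt_cast h1 ht
        rw [← htri] at hLt
        omega
  refine ⟨hbdd, ?_⟩
  rw [hSect, csInf_Ici]
end

section
/- Let a = p/q ≥ 9 be rational in lowest terms with weight expansion w(a) = (w_1, …, w_M) (so that 0 < w_i ≤ 1 for all i). Then for every positive integer d and all nonnegative integers m_1, …, m_M with Σ_i m_i = 3d − 1, one has Σ_i m_i·w_i ≤ d·√a. (This is Biran's argument showing that for a ≥ 9 there is no obstruction beyond the volume bound.) -/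
lemma W_entry_le : ∀ q p x, x ∈ W p q → x ≤ q := by
  intro q
  induction q using Nat.strong_induction_on with
  | _ q ih =>
    intro p x hx
    rw [W] at hx
    split_ifs at hx with h1 h2
    · simp at hx
    · exact (List.eq_of_mem_replicate hx).le
    · rcases List.mem_append.mp hx with h | h
      · exact (List.eq_of_mem_replicate h).le
      · exact le_trans (ih _ (Nat.mod_lt _ (Nat.pos_of_ne_zero h1)) _ _ h)
          (Nat.mod_lt _ (Nat.pos_of_ne_zero h1)).le

/-- Biran's argument: for rational `a = p/q ≥ 9` in lowest terms with weight
expansion `w(a) = (1/q)·W(p,q)`, for every positive integer `d` and all nonnegative integers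
`m₁, …, m_M` with `Σ mᵢ = 3d − 1`, one has `Σ mᵢ·wᵢ ≤ d·√a`. -/
theorem no_obstruction_above_nine (p q : ℕ) (hq : 0 < q) (hcop : Nat.Coprime p q)
    (h9 : 9 * q ≤ p) (d : ℕ) (hd : 0 < d)
    (m : Fin (W p q).length → ℕ) (hsum : ∑ i, m i = 3 * d - 1) :
    ∑ i, (m i : ℝ) * (((W p q).get i : ℝ) / q) ≤ (d : ℝ) * Real.sqrt ((p : ℝ)/q) := by
  have hq' : (0 : ℝ) < q := by exact_mod_cast hq
  have h1 : ∑ i, (m i : ℝ) * (((W p q).get i : ℝ) / q) ≤ ∑ i, (m i : ℝ) := by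
    apply Finset.sum_le_sum
    intro i _
    have hle : ((W p q).get i : ℝ) ≤ q := by
      exact_mod_cast W_entry_le q p _ ((W p q).get_mem i)
    have : ((W p q).get i : ℝ) / q ≤ 1 := by
      rw [div_le_one hq']; exact hle
    calc (m i : ℝ) * (((W p q).get i : ℝ) / q) ≤ (m i : ℝ) * 1 := by
          apply mul_le_mul_of_nonneg_left this (by positivity)
      _ = (m i : ℝ) := by ring
  have h2 : ∑ i, (m i : ℝ) = ((3 * d - 1 : ℕ) : ℝ) := by
    rw [← hsum]; push_cast; ring
  have h3 : ((3 * d - 1 : ℕ) : ℝ) ≤ 3 * d := by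
    exact_mod_cast Nat.sub_le (3 * d) 1
  have h4 : (3 : ℝ) ≤ Real.sqrt ((p : ℝ) / q) := by
    rw [show (3 : ℝ) = Real.sqrt 9 by
      rw [show (9 : ℝ) = 3 ^ 2 by norm_num, Real.sqrt_sq (by norm_num)]]
    apply Real.sqrt_le_sqrt
    rw [le_div_iff₀ hq']
    exact_mod_cast h9
  have hd' : (0 : ℝ) ≤ d := by positivity
  calc ∑ i, (m i : ℝ) * (((W p q).get i : ℝ) / q) ≤ ((3 * d - 1 : ℕ) : ℝ) := h1.trans_eq h2
    _ ≤ 3 * d := h3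
    _ = (d : ℝ) * 3 := by ring
    _ ≤ (d : ℝ) * Real.sqrt ((p : ℝ) / q) := mul_le_mul_of_nonneg_left h4 hd'
end
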